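/- arXiv:2507.15632 — 11 statements merged into one kernel-verified Lean document; each statement's English description precedes it below -/
import Mathlib

section
/- For integers 1 ≤ m ≤ n, the total variation distance between the uniform distribution on all maps Fin m → Fin n and the uniform distribution on injective maps Fin m → Fin n is at most m(m−1)/n; explicitly, ∑_{f : Fin m → Fin n} | n^(−m) − χ(f)·(n−m)!/n! | ≤ m(m−1)/n, where χ(f) = 1 if f is injective and χ(f) = 0 otherwise. -/
lemma aux_desc (n : ℕ) : ∀ m : ℕ, m ≤ n →
    (n : ℝ) ^ m - (n.descFactorial m : ℝ) ≤
      (m : ℝ) * ((m : ℝ) - 1) / 2 * (n : ℝ) ^ (m - 1) := by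
  intro m
  induction m with
  | zero => simp
  | succ k ih =>
    intro hkn
    have hk : k ≤ n := Nat.le_of_succ_le hkn
    rcases Nat.eq_zero_or_pos k with hk0 | hkpos
    · subst hk0; simp
    have hdesc : (n.descFactorial (k + 1) : ℝ) = ((n : ℝ) - k) * n.descFactorial k := by
      rw [Nat.descFactorial_succ]
      push_cast [Nat.cast_sub hk]
      ring
    have hle : (n.descFactorial k : ℝ) ≤ (n : ℝ) ^ k := by
      exact_mod_cast Nat.descFactorial_le_pow n k
    have ihk := ih hk
    have hn0 : (0 : ℝ) ≤ n := Nat.cast_nonneg n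
    have hpow : (n : ℝ) ^ k = (n : ℝ) * (n : ℝ) ^ (k - 1) := by
      conv_lhs => rw [← Nat.succ_pred_eq_of_pos hkpos]
      rw [pow_succ']
      norm_num [Nat.pred_eq_sub_one]
    have key : (n : ℝ) ^ (k + 1) - (n.descFactorial (k + 1) : ℝ)
        = (n : ℝ) * ((n : ℝ) ^ k - n.descFactorial k) + (k : ℝ) * n.descFactorial k := by
      rw [hdesc, pow_succ]; ring
    rw [key]
    have h1 : (n : ℝ) * ((n : ℝ) ^ k - n.descFactorial k)
        ≤ (k : ℝ) * ((k : ℝ) - 1) / 2 * (n : ℝ) ^ k := by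
      calc (n : ℝ) * ((n : ℝ) ^ k - n.descFactorial k)
          ≤ (n : ℝ) * ((k : ℝ) * ((k : ℝ) - 1) / 2 * (n : ℝ) ^ (k - 1)) :=
            mul_le_mul_of_nonneg_left ihk hn0
        _ = (k : ℝ) * ((k : ℝ) - 1) / 2 * (n : ℝ) ^ k := by rw [hpow]; ring
    have h2 : (k : ℝ) * (n.descFactorial k : ℝ) ≤ (k : ℝ) * (n : ℝ) ^ k :=
      mul_le_mul_of_nonneg_left hle (Nat.cast_nonneg k)
    have : (k : ℝ) * ((k : ℝ) - 1) / 2 * (n : ℝ) ^ k + (k : ℝ) * (n : ℝ) ^ k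
        = ((k : ℝ) + 1) * (((k : ℝ) + 1) - 1) / 2 * (n : ℝ) ^ k := by ring
    calc (n : ℝ) * ((n : ℝ) ^ k - n.descFactorial k) + (k : ℝ) * n.descFactorial k
        ≤ (k : ℝ) * ((k : ℝ) - 1) / 2 * (n : ℝ) ^ k + (k : ℝ) * (n : ℝ) ^ k :=
          add_le_add h1 h2
      _ = ((k : ℝ) + 1) * (((k : ℝ) + 1) - 1) / 2 * (n : ℝ) ^ k := this
      _ = (↑(k + 1) : ℝ) * ((↑(k + 1) : ℝ) - 1) / 2 * (n : ℝ) ^ ((k + 1) - 1) := by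
          push_cast; simp

theorem stmt1 (m n : ℕ) (hm : 1 ≤ m) (hmn : m ≤ n) :
    ∑ f : Fin m → Fin n,
        |((n : ℝ) ^ m)⁻¹ -
          (if Function.Injective f then
            (Nat.factorial (n - m) : ℝ) / (Nat.factorial n : ℝ) else 0)|
      ≤ (m : ℝ) * ((m : ℝ) - 1) / (n : ℝ) := by
  classical
  have hn : 1 ≤ n := le_trans hm hmn
  have hn0 : (0 : ℝ) < (n : ℝ) := by exact_mod_cast hn
  set K : ℕ := n.descFactorial m with hKdef
  have hKpos : 0 < K := Nat.pos_of_ne_zero (fun h => Nat.not_lt.mpr hmn (Nat.descFactorial_eq_zero_iff_lt.mp h))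
  have hKR : (0 : ℝ) < (K : ℝ) := by exact_mod_cast hKpos
  have hfac : ((n - m).factorial : ℝ) * (K : ℝ) = (n.factorial : ℝ) := by
    exact_mod_cast congrArg (Nat.cast (R := ℝ)) (Nat.factorial_mul_descFactorial hmn)
  have hnfac : (0 : ℝ) < (n.factorial : ℝ) := by exact_mod_cast n.factorial_pos
  have hd : ((n - m).factorial : ℝ) / (n.factorial : ℝ) = ((K : ℝ))⁻¹ := by
    field_simp
    linarith [hfac]
  have hcard : (Finset.univ.filter fun f : Fin m → Fin n => Function.Injective f).card = K := by
    rw [← Fintype.card_subtype]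
    rw [Fintype.card_congr (Equiv.subtypeInjectiveEquivEmbedding (Fin m) (Fin n))]
    rw [Fintype.card_embedding_eq]
    simp [hKdef]
  have hpowpos : (0 : ℝ) < (n : ℝ) ^ m := pow_pos hn0 m
  have hKle : (K : ℝ) ≤ (n : ℝ) ^ m := by
    exact_mod_cast Nat.descFactorial_le_pow n m
  have hple : ((n : ℝ) ^ m)⁻¹ ≤ (K : ℝ)⁻¹ := by
    apply inv_anti₀ hKR hKle
  -- split the sum
  rw [← Finset.sum_filter_add_sum_filter_not Finset.univ
      (fun f : Fin m → Fin n => Function.Injective f)]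
  have hsum1 : ∑ f ∈ Finset.univ.filter (fun f : Fin m → Fin n => Function.Injective f),
      |((n : ℝ) ^ m)⁻¹ - (if Function.Injective f then
        ((n - m).factorial : ℝ) / (n.factorial : ℝ) else 0)|
      = (K : ℝ) * ((K : ℝ)⁻¹ - ((n : ℝ) ^ m)⁻¹) := by
    rw [Finset.sum_congr rfl (fun f hf => ?_), Finset.sum_const, hcard, nsmul_eq_mul]
    rw [if_pos (Finset.mem_filter.mp hf).2, hd, abs_sub_comm,
      abs_of_nonneg (by linarith)]
  have hsum2 : ∑ f ∈ Finset.univ.filter (fun f : Fin m → Fin n => ¬ Function.Injective f),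
      |((n : ℝ) ^ m)⁻¹ - (if Function.Injective f then
        ((n - m).factorial : ℝ) / (n.factorial : ℝ) else 0)|
      = ((n : ℝ) ^ m - K) * ((n : ℝ) ^ m)⁻¹ := by
    rw [Finset.sum_congr rfl (fun f hf => ?_), Finset.sum_const, nsmul_eq_mul]
    · congr 1
      have : (Finset.univ.filter fun f : Fin m → Fin n => ¬ Function.Injective f).card
          = n ^ m - K := by
        rw [Finset.filter_not, Finset.card_sdiff_of_subset (Finset.filter_subset _ _), hcard]
        simp [Finset.card_univ, Fintype.card_fun]
      rw [this]
      have hKle' : K ≤ n ^ m := Nat.descFactorial_le_pow n m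
      push_cast [Nat.cast_sub hKle']
      ring
    · rw [if_neg (Finset.mem_filter.mp hf).2, sub_zero,
        abs_of_nonneg (le_of_lt (inv_pos.mpr hpowpos))]
  rw [hsum1, hsum2]
  have hKinv : (K : ℝ) * (K : ℝ)⁻¹ = 1 := mul_inv_cancel₀ (ne_of_gt hKR)
  have hpinv : (n : ℝ) ^ m * ((n : ℝ) ^ m)⁻¹ = 1 := mul_inv_cancel₀ (ne_of_gt hpowpos)
  have heq : (K : ℝ) * ((K : ℝ)⁻¹ - ((n : ℝ) ^ m)⁻¹) + ((n : ℝ) ^ m - K) * ((n : ℝ) ^ m)⁻¹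
      = 2 * ((n : ℝ) ^ m - K) * ((n : ℝ) ^ m)⁻¹ := by
    field_simp
    ring
  rw [heq]
  have haux := aux_desc n m hmn
  have hpow : (n : ℝ) ^ m = (n : ℝ) * (n : ℝ) ^ (m - 1) := by
    conv_lhs => rw [← Nat.succ_pred_eq_of_pos hm]
    rw [pow_succ']
    norm_num [Nat.pred_eq_sub_one]
  rw [div_eq_mul_inv]
  calc 2 * ((n : ℝ) ^ m - K) * ((n : ℝ) ^ m)⁻¹
      ≤ 2 * ((m : ℝ) * ((m : ℝ) - 1) / 2 * (n : ℝ) ^ (m - 1)) * ((n : ℝ) ^ m)⁻¹ := by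
        apply mul_le_mul_of_nonneg_right _ (le_of_lt (inv_pos.mpr hpowpos))
        linarith
    _ = (m : ℝ) * ((m : ℝ) - 1) * ((n : ℝ) ^ (m - 1) * ((n : ℝ) ^ m)⁻¹) := by ring
    _ = (m : ℝ) * ((m : ℝ) - 1) * (n : ℝ)⁻¹ := by
        congr 1
        rw [hpow, mul_inv, ← mul_assoc, mul_comm ((n:ℝ)^(m-1)), mul_assoc,
          mul_inv_cancel₀ (ne_of_gt (pow_pos hn0 (m-1))), mul_one]
end

section
/- Let f : Fin m → Fin n be a map and let k ≥ 1 be an integer such that every fiber of f has cardinality at most k, i.e. |f⁻¹(i)| ≤ k for all i ∈ Fin n. Then m ≤ n·k and there exists a permutation g of Fin (n·k) such that f = d_{n,nk} ∘ g ∘ ι_{nk,m}, where ι_{nk,m} : Fin m → Fin (n·k) is the canonical inclusion and d_{n,nk} : Fin (n·k) → Fin n is the standard equipartition. -/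
open Function

lemma exists_perm_comp {α β : Type*} [Fintype α] [Fintype β] [DecidableEq β]
    (u v : α → β) (hu : Injective u) (hv : Injective v) :
    ∃ σ : Equiv.Perm β, ∀ a, σ (u a) = v a := by
  classical
  have hcard : Fintype.card ((Set.range u)ᶜ : Set β) =
      Fintype.card ((Set.range v)ᶜ : Set β) := by
    have h1 := Set.card_range_of_injective hu
    have h2 := Set.card_range_of_injective hv
    have c1 := Fintype.card_compl_set (Set.range u)
    have c2 := Fintype.card_compl_set (Set.range v)
    omega
  let e : ((Set.range u)ᶜ : Set β) ≃ ((Set.range v)ᶜ : Set β) :=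
    Fintype.equivOfCardEq hcard
  let σ : Equiv.Perm β :=
    (Equiv.Set.sumCompl (Set.range u)).symm.trans
      ((Equiv.sumCongr ((Equiv.ofInjective u hu).symm.trans (Equiv.ofInjective v hv)) e).trans
        (Equiv.Set.sumCompl (Set.range v)))
  refine ⟨σ, fun a => ?_⟩
  have hmem : u a ∈ Set.range u := ⟨a, rfl⟩
  simp only [σ, Equiv.trans_apply, Equiv.Set.sumCompl_symm_apply_of_mem hmem,
    Equiv.sumCongr_apply, Sum.map_inl, Equiv.Set.sumCompl_apply_inl]
  have : (Equiv.ofInjective u hu).symm ⟨u a, hmem⟩ = a :=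
    (Equiv.ofInjective u hu).injective (by simp)
  rw [this]
  rfl

/-- The standard equipartition `d_{n,nk} : Fin (n*k) → Fin n`, sending the `i`-th
consecutive block of `k` indices to `i` (0-based: `x ↦ ⌊x / k⌋`). -/
def equipart (n k : ℕ) (hk : 0 < k) : Fin (n * k) → Fin n :=
  fun x => ⟨(x : ℕ) / k, (Nat.div_lt_iff_lt_mul hk).mpr x.isLt⟩

theorem stmt2 (m n k : ℕ) (hk : 1 ≤ k) (f : Fin m → Fin n)
    (hfib : ∀ i : Fin n, (Finset.univ.filter (fun j : Fin m => f j = i)).card ≤ k) :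
    ∃ (hmk : m ≤ n * k) (g : Equiv.Perm (Fin (n * k))),
      ∀ x : Fin m, f x = equipart n k hk (g (Fin.castLE hmk x)) := by
  classical
  set idx : Fin m → ℕ := fun x => (Finset.univ.filter (fun j : Fin m => f j = f x ∧ j < x)).card
    with hidx_def
  have hidx_lt : ∀ x : Fin m, idx x < k := by
    intro x
    refine lt_of_lt_of_le ?_ (hfib (f x))
    apply Finset.card_lt_card
    constructor
    · intro j hj
      simp only [Finset.mem_filter, Finset.mem_univ, true_and] at hj ⊢
      exact hj.1
    · intro hsub
      have hx : x ∈ Finset.univ.filter (fun j : Fin m => f j = f x) := by simp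
      have := hsub hx
      simp at this
  have hidx_inj : ∀ x y : Fin m, f x = f y → idx x = idx y → x = y := by
    have key : ∀ x y : Fin m, f x = f y → x < y → idx x < idx y := by
      intro x y hfe hlt
      apply Finset.card_lt_card
      constructor
      · intro j hj
        simp only [Finset.mem_filter, Finset.mem_univ, true_and] at hj ⊢
        exact ⟨hj.1.trans hfe, hj.2.trans hlt⟩
      · intro hsub
        have hx : x ∈ Finset.univ.filter (fun j : Fin m => f j = f y ∧ j < y) := by
          simp [hfe, hlt]
        have := hsub hx
        simp at this
    intro x y hfe hie
    rcases lt_trichotomy x y with h | h | h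
    · exact absurd hie (Nat.ne_of_lt (key x y hfe h))
    · exact h
    · exact absurd hie.symm (Nat.ne_of_lt (key y x hfe.symm h))
  have hFlt : ∀ x : Fin m, (f x : ℕ) * k + idx x < n * k := by
    intro x
    have h1 : (f x : ℕ) + 1 ≤ n := (f x).isLt
    have h2 := hidx_lt x
    calc (f x : ℕ) * k + idx x < (f x : ℕ) * k + k := by omega
      _ = ((f x : ℕ) + 1) * k := by ring
      _ ≤ n * k := Nat.mul_le_mul_right k h1
  let F : Fin m → Fin (n * k) := fun x => ⟨(f x : ℕ) * k + idx x, hFlt x⟩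
  have hdiv : ∀ x : Fin m, ((F x : ℕ)) / k = (f x : ℕ) := by
    intro x
    have h2 := hidx_lt x
    show ((f x : ℕ) * k + idx x) / k = (f x : ℕ)
    rw [Nat.add_comm, Nat.add_mul_div_right _ _ (by omega : 0 < k),
      Nat.div_eq_of_lt h2, Nat.zero_add]
  have hF : Function.Injective F := by
    intro x y hxy
    have hfe : f x = f y := by
      have := congrArg (fun z : Fin (n * k) => (z : ℕ) / k) hxy
      simp only [hdiv] at this
      exact Fin.ext this
    have h : (f x : ℕ) * k + idx x = (f y : ℕ) * k + idx y := congrArg Fin.val hxy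
    rw [hfe] at h
    exact hidx_inj x y hfe (by omega)
  have hmk : m ≤ n * k := by
    have := Fintype.card_le_of_injective F hF
    simpa using this
  have hcast : Function.Injective (Fin.castLE hmk) := Fin.castLE_injective hmk
  obtain ⟨σ, hσ⟩ := exists_perm_comp (Fin.castLE hmk) F hcast hF
  refine ⟨hmk, σ, fun x => ?_⟩
  rw [hσ x]
  apply Fin.ext
  simpa [equipart] using (hdiv x).symm
end

section
/- Let E be a measurable space, let 1 ≤ m ≤ n be integers, and let μ be a probability measure on arrays (Fin n → Fin n → E) that is jointly exchangeable, i.e. for every permutation σ of Fin n the pushforward of μ under X ↦ (fun i j => X (σ i) (σ j)) equals μ. Let ν₁ be the pushforward of μ under X ↦ (fun (a b : Fin m) => X (ι a) (ι b)), where ι : Fin m → Fin n is the canonical inclusion (the principal m × m subarray), and let ν₂ = n^(−m) · ∑_{f : Fin m → Fin n} (pushforward of μ under X ↦ (fun a b => X (f a) (f b))). Then for every measurable function φ : (Fin m → Fin m → E) → ℝ with |φ| ≤ 1 everywhere, |∫ φ dν₁ − ∫ φ dν₂| ≤ m(m−1)/n. -/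
open MeasureTheory
open scoped ENNReal

lemma exists_perm_ext {m n : ℕ} (f g : Fin m → Fin n) (hf : Function.Injective f)
    (hg : Function.Injective g) : ∃ σ : Equiv.Perm (Fin n), ∀ a, σ (f a) = g a := by
  classical
  let e : {x // x ∈ Set.range f} ≃ {x // x ∈ Set.range g} :=
    (Equiv.ofInjective f hf).symm.trans (Equiv.ofInjective g hg)
  refine ⟨e.extendSubtype, fun a => ?_⟩
  rw [Equiv.extendSubtype_apply_of_mem e (f a) (Set.mem_range_self a)]
  have h1 : (⟨f a, Set.mem_range_self a⟩ : {x // x ∈ Set.range f}) = Equiv.ofInjective f hf a := by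
    simp [Equiv.ofInjective_apply]
  rw [h1]
  simp [e]

lemma nat_key (n : ℕ) : ∀ m, m ≤ n → 2 * n ^ m ≤ 2 * n.descFactorial m + m * (m - 1) * n ^ (m - 1) := by
  intro m
  induction m with
  | zero => simp
  | succ k ih =>
    intro hk
    have hk' : k ≤ n := Nat.le_of_succ_le hk
    have IH := ih hk'
    have h1 : 2 * n ^ (k + 1) = n * (2 * n ^ k) := by ring
    have h2 : n * (2 * n ^ k) ≤ n * (2 * n.descFactorial k + k * (k - 1) * n ^ (k - 1)) :=
      Nat.mul_le_mul_left n IH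
    have h3 : n * (2 * n.descFactorial k) = 2 * ((n - k) * n.descFactorial k) + 2 * (k * n.descFactorial k) := by
      have : (n - k) + k = n := Nat.sub_add_cancel hk'
      nlinarith [this]
    have h4 : k * n.descFactorial k ≤ k * n ^ k := Nat.mul_le_mul_left k (Nat.descFactorial_le_pow n k)
    have h5 : n * (k * (k - 1) * n ^ (k - 1)) ≤ k * (k - 1) * n ^ k := by
      cases k with
      | zero => simp
      | succ j => simp [pow_succ]; ring_nf; omega
    rw [Nat.descFactorial_succ]
    have h6 : k * (k - 1) + 2 * k = (k + 1) * ((k+1) - 1) := by cases k <;> [simp; (simp; ring)]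
    calc 2 * n ^ (k + 1) = n * (2 * n ^ k) := h1
      _ ≤ n * (2 * n.descFactorial k) + n * (k * (k - 1) * n ^ (k - 1)) := by rw [← Nat.mul_add]; exact h2
      _ ≤ 2 * ((n - k) * n.descFactorial k) + 2 * (k * n ^ k) + k * (k - 1) * n ^ k := by omega
      _ = 2 * ((n - k) * n.descFactorial k) + (k * (k-1) + 2 * k) * n ^ k := by ring
      _ = 2 * ((n - k) * n.descFactorial k) + (k + 1) * ((k + 1) - 1) * n ^ ((k+1) - 1) := by rw [h6]; simp

theorem stmt4 {E : Type*} [MeasurableSpace E] (m n : ℕ) (hm : 1 ≤ m) (hmn : m ≤ n)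
    (μ : Measure (Fin n → Fin n → E)) [IsProbabilityMeasure μ]
    (hexch : ∀ σ : Equiv.Perm (Fin n),
      μ.map (fun X => fun i j => X (σ i) (σ j)) = μ)
    (ν₁ ν₂ : Measure (Fin m → Fin m → E))
    (hν₁ : ν₁ = μ.map
      (fun X => fun (a b : Fin m) => X (Fin.castLE hmn a) (Fin.castLE hmn b)))
    (hν₂ : ν₂ = ((n : ℝ≥0∞) ^ m)⁻¹ •
      ∑ f : Fin m → Fin n, μ.map (fun X => fun a b => X (f a) (f b)))
    (φ : (Fin m → Fin m → E) → ℝ) (hφm : Measurable φ) (hφb : ∀ z, |φ z| ≤ 1) :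
    |∫ z, φ z ∂ν₁ - ∫ z, φ z ∂ν₂| ≤ (m : ℝ) * ((m : ℝ) - 1) / (n : ℝ) := by
  classical
  have hn1 : 1 ≤ n := le_trans hm hmn
  have hn : (0:ℝ) < n := by exact_mod_cast hn1
  have hNm : (0:ℝ) < (n:ℝ) ^ m := by positivity
  have mf : ∀ f : Fin m → Fin n,
      Measurable (fun X : Fin n → Fin n → E => fun a b => X (f a) (f b)) := fun f =>
    measurable_pi_lambda _ fun a => measurable_pi_lambda _ fun b =>
      (measurable_pi_apply (f b)).comp (measurable_pi_apply (f a))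
  set ι : Fin m → Fin n := Fin.castLE hmn with hιdef
  have hιinj : Function.Injective ι := Fin.castLE_injective hmn
  have hmapeq : ∀ f : Fin m → Fin n, Function.Injective f →
      μ.map (fun X => fun a b => X (f a) (f b)) = μ.map (fun X => fun a b => X (ι a) (ι b)) := by
    intro f hfinj
    obtain ⟨σ, hσ⟩ := exists_perm_ext ι f hιinj hfinj
    have hcomp : (fun X : Fin n → Fin n → E => fun a b => X (f a) (f b)) =
        (fun X : Fin n → Fin n → E => fun a b => X (ι a) (ι b)) ∘
          (fun X => fun i j => X (σ i) (σ j)) := by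
      funext X
      simp only [Function.comp_apply]
      funext a b
      rw [hσ a, hσ b]
    rw [hcomp, ← Measure.map_map (mf ι) ((measurable_pi_lambda _ fun i => measurable_pi_lambda _ fun j =>
      (measurable_pi_apply (σ j)).comp (measurable_pi_apply (σ i)))), hexch σ]
  have hprob : ∀ f : Fin m → Fin n,
      IsProbabilityMeasure (μ.map (fun X => fun a b => X (f a) (f b))) := fun f =>
    Measure.isProbabilityMeasure_map (mf f).aemeasurable
  set I : (Fin m → Fin n) → ℝ :=
    fun f => ∫ z, φ z ∂(μ.map (fun X => fun a b => X (f a) (f b))) with hIdef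
  have hIbound : ∀ f, |I f| ≤ 1 := by
    intro f
    haveI := hprob f
    have := norm_integral_le_of_norm_le_const
      (μ := μ.map (fun X => fun a b => X (f a) (f b))) (C := 1)
      (Filter.Eventually.of_forall fun x => by simpa using hφb x) (f := φ)
    simpa using this
  have hIint : ∀ f : Fin m → Fin n,
      Integrable φ (μ.map (fun X => fun a b => X (f a) (f b))) := by
    intro f
    haveI := hprob f
    exact (integrable_const (1:ℝ)).mono' hφm.aestronglyMeasurable
      (Filter.Eventually.of_forall fun x => by simpa using hφb x)
  have hIeq : ∀ f : Fin m → Fin n, Function.Injective f → I f = I ι := by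
    intro f hf
    simp only [hIdef]
    rw [hmapeq f hf]
  have h1 : ∫ z, φ z ∂ν₁ = I ι := by rw [hν₁]
  have h2 : ∫ z, φ z ∂ν₂ = ((n:ℝ) ^ m)⁻¹ * ∑ f : Fin m → Fin n, I f := by
    rw [hν₂, integral_smul_measure, integral_finset_sum_measure (fun f _ => hIint f)]
    congr 1
    rw [ENNReal.toReal_inv]
    norm_num
  have hcard : Fintype.card (Fin m → Fin n) = n ^ m := by simp
  have hsum : ∫ z, φ z ∂ν₁ - ∫ z, φ z ∂ν₂ =
      ((n:ℝ) ^ m)⁻¹ * ∑ f : Fin m → Fin n, (I ι - I f) := by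
    rw [h1, h2, Finset.sum_sub_distrib, Finset.sum_const, Finset.card_univ, hcard]
    field_simp
    ring
  -- counting
  set D : ℕ := (Finset.univ.filter (fun f : Fin m → Fin n => ¬ Function.Injective f)).card with hD
  have hinjcard : (Finset.univ.filter (fun f : Fin m → Fin n => Function.Injective f)).card
      = n.descFactorial m := by
    rw [← Fintype.card_subtype]
    rw [Fintype.card_congr (Equiv.subtypeInjectiveEquivEmbedding (Fin m) (Fin n))]
    simp [Fintype.card_embedding_eq]
  have hsplit : (Finset.univ.filter (fun f : Fin m → Fin n => Function.Injective f)).card + D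
      = n ^ m := by
    rw [hD, Finset.card_filter_add_card_filter_not, Finset.card_univ, hcard]
  have hDval : D = n ^ m - n.descFactorial m := by omega
  have hDle : 2 * D ≤ m * (m - 1) * n ^ (m - 1) := by
    have := nat_key n m hmn
    have hdle := Nat.descFactorial_le_pow n m
    omega
  have habs : |∫ z, φ z ∂ν₁ - ∫ z, φ z ∂ν₂| ≤ ((n:ℝ) ^ m)⁻¹ * (2 * D) := by
    rw [hsum, abs_mul, abs_of_pos (inv_pos.mpr hNm)]
    refine mul_le_mul_of_nonneg_left ?_ (by positivity)
    calc |∑ f : Fin m → Fin n, (I ι - I f)| ≤ ∑ f : Fin m → Fin n, |I ι - I f| :=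
          Finset.abs_sum_le_sum_abs _ _
      _ ≤ ∑ f : Fin m → Fin n, (if Function.Injective f then 0 else 2) := by
          refine Finset.sum_le_sum fun f _ => ?_
          by_cases hf : Function.Injective f
          · simp [hf, hIeq f hf]
          · simp only [hf, if_false]
            calc |I ι - I f| ≤ |I ι| + |I f| := abs_sub _ _
              _ ≤ 1 + 1 := add_le_add (hIbound ι) (hIbound f)
              _ = 2 := by norm_num
      _ = 2 * D := by
          rw [Finset.sum_ite, Finset.sum_const, Finset.sum_const]
          simp [hD, mul_comm]
  refine le_trans habs ?_
  have hpow : (n:ℝ) ^ m = (n:ℝ) ^ (m - 1) * n := by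
    rw [← pow_succ]
    congr 1
    omega
  have hDleR : 2 * (D:ℝ) ≤ (m:ℝ) * ((m:ℝ) - 1) * (n:ℝ) ^ (m - 1) := by
    have : ((m:ℝ) - 1) = ((m - 1 : ℕ) : ℝ) := by
      have := Nat.cast_sub hm (R := ℝ)
      simp at this
      rw [this]
    rw [this]
    exact_mod_cast hDle
  have hpos : (0:ℝ) < (n:ℝ) ^ (m - 1) := by positivity
  rw [hpow]
  calc ((n:ℝ) ^ (m - 1) * n)⁻¹ * (2 * D)
      ≤ ((n:ℝ) ^ (m - 1) * n)⁻¹ * ((m:ℝ) * ((m:ℝ) - 1) * (n:ℝ) ^ (m - 1)) := by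
        refine mul_le_mul_of_nonneg_left ?_ (by positivity)
        exact hDleR
    _ = (m:ℝ) * ((m:ℝ) - 1) / (n:ℝ) := by
        field_simp
end

section
/- Let m, n ≥ 1 be integers with m dividing n. There exists a probability distribution w on pairs (F, Ψ) of maps Fin n → Fin m (a coupling) such that: the first marginal of w is the uniform distribution on all m^n maps Fin n → Fin m; the second marginal of w equals the distribution of d_{m,n} ∘ G, where G is a uniformly random permutation of Fin n and d_{m,n} is the standard equipartition; and the expected normalized Hamming distance satisfies ∑_{(F,Ψ)} w(F,Ψ) · (#{i ∈ Fin n : F(i) ≠ Ψ(i)} / n) ≤ √( m(m−1) / (n/m) ) = √( m²(m−1)/n ). -/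
def dmap (m n : ℕ) (hn : 0 < n) (hdvd : m ∣ n) : Fin n → Fin m :=
  fun x => ⟨(x : ℕ) / (n / m), by
    have hm : 0 < m := Nat.pos_of_dvd_of_pos hdvd hn
    have hb : 0 < n / m := Nat.div_pos (Nat.le_of_dvd hn hdvd) hm
    refine (Nat.div_lt_iff_lt_mul hb).mpr ?_
    have hnm : m * (n / m) = n := Nat.mul_div_cancel' hdvd
    have := x.isLt
    omega⟩

open Finset

variable {m n : ℕ}

/-- fiber count -/
def Ncnt (F : Fin n → Fin m) (j : Fin m) : ℕ := (univ.filter (fun i => F i = j)).card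

/-- Hamming distance -/
def distH (F Ψ : Fin n → Fin m) : ℕ := (univ.filter (fun i => F i ≠ Ψ i)).card

lemma sum_Ncnt (F : Fin n → Fin m) : ∑ j, Ncnt F j = n := by
  classical
  have := Finset.card_eq_sum_card_fiberwise (f := F) (s := univ) (t := univ)
    (fun x _ => mem_univ _)
  simpa [Ncnt, Finset.card_univ] using this.symm

lemma Ncnt_comp_perm (F : Fin n → Fin m) (σ : Equiv.Perm (Fin n)) (j : Fin m) :
    Ncnt (fun i => F (σ i)) j = Ncnt F j := by
  classical
  unfold Ncnt
  apply Finset.card_bij (fun i _ => σ i)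
  · intro a ha; simp at ha ⊢; exact ha
  · intro a _ b _ h; exact σ.injective h
  · intro b hb; exact ⟨σ.symm b, by simp at hb ⊢; simpa using hb, by simp⟩

lemma distH_comp_perm (F Ψ : Fin n → Fin m) (σ : Equiv.Perm (Fin n)) :
    distH (fun i => F (σ i)) (fun i => Ψ (σ i)) = distH F Ψ := by
  classical
  unfold distH
  apply Finset.card_bij (fun i _ => σ i)
  · intro a ha; simp at ha ⊢; exact ha
  · intro a _ b _ h; exact σ.injective h
  · intro b hb; exact ⟨σ.symm b, by simp at hb ⊢; simpa using hb, by simp⟩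

lemma distH_triangle (F G Ψ : Fin n → Fin m) : distH F Ψ ≤ distH F G + distH G Ψ := by
  classical
  unfold distH
  refine le_trans (Finset.card_le_card ?_) (Finset.card_union_le _ _)
  intro i hi
  simp only [mem_filter, mem_union, mem_univ, true_and] at hi ⊢
  by_cases h : F i = G i
  · right; rw [← h]; exact hi
  · left; exact h

lemma dmap_balanced (hn : 0 < n) (hdvd : m ∣ n) (j : Fin m) :
    Ncnt (dmap m n hn hdvd) j = n / m := by
  classical
  have hm : 0 < m := Nat.pos_of_dvd_of_pos hdvd hn
  have hb : 0 < n / m := Nat.div_pos (Nat.le_of_dvd hn hdvd) hm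
  have hnm : m * (n / m) = n := Nat.mul_div_cancel' hdvd
  have hval : ∀ i : Fin n, ((dmap m n hn hdvd i : Fin m) : ℕ) = (i : ℕ) / (n / m) :=
    fun i => rfl
  unfold Ncnt
  have key : (univ.filter (fun i : Fin n => dmap m n hn hdvd i = j)).card
      = ((Finset.range n).filter (fun x => x / (n / m) = (j : ℕ))).card := by
    refine Finset.card_bij (fun i _ => (i : ℕ)) ?_ ?_ ?_
    · intro a ha
      simp only [mem_filter, mem_univ, true_and] at ha
      simp only [mem_filter, Finset.mem_range]
      exact ⟨a.isLt, by rw [← hval a, ha]⟩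
    · intro a _ b _ h; exact Fin.val_injective h
    · intro b hb'
      simp only [mem_filter, Finset.mem_range] at hb'
      refine ⟨⟨b, hb'.1⟩, ?_, rfl⟩
      simp only [mem_filter, mem_univ, true_and]
      apply Fin.val_injective
      rw [hval]; exact hb'.2
  rw [key]
  have hset : (Finset.range n).filter (fun x => x / (n / m) = (j : ℕ))
      = Finset.Ico ((j : ℕ) * (n / m)) ((j : ℕ) * (n / m) + n / m) := by
    ext x
    simp only [mem_filter, Finset.mem_range, Finset.mem_Ico]
    have hdm : (n / m) * (x / (n / m)) + x % (n / m) = x := Nat.div_add_mod x (n/m)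
    have hmod : x % (n / m) < n / m := Nat.mod_lt _ hb
    have hj : (j : ℕ) < m := j.isLt
    have hsm : ((j:ℕ)+1) * (n/m) = (j:ℕ)*(n/m) + (n/m) := by rw [Nat.succ_mul]
    have hjm : ((j:ℕ)+1) * (n/m) ≤ m * (n/m) := Nat.mul_le_mul_right _ (by omega)
    constructor
    · rintro ⟨hx, hdiv⟩
      have h1 : (j:ℕ) * (n/m) ≤ x := by
        calc (j:ℕ) * (n/m) = x/(n/m) * (n/m) := by rw [hdiv]
          _ ≤ x := Nat.div_mul_le_self x _
      have h2 : x < (x/(n/m)) * (n/m) + (n/m) := by rw [mul_comm]; omega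
      rw [hdiv] at h2
      exact ⟨h1, h2⟩
    · rintro ⟨h1, h2⟩
      refine ⟨by omega, Nat.div_eq_of_lt_le h1 (by rw [Nat.succ_mul]; omega)⟩
  rw [hset, Nat.card_Ico]
  omega

/-- balanced maps -/
def Bset (m n : ℕ) : Finset (Fin n → Fin m) :=
  univ.filter (fun Ψ => ∀ j, Ncnt Ψ j = n / m)

lemma balanced_of_le (hm : 0 < m) (hdvd : m ∣ n) (F : Fin n → Fin m)
    (h : ∀ j, Ncnt F j ≤ n / m) : ∀ j, Ncnt F j = n / m := by
  have hnm : m * (n / m) = n := Nat.mul_div_cancel' hdvd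
  have hsum : ∑ j, Ncnt F j = n := sum_Ncnt F
  by_contra hc
  push_neg at hc
  obtain ⟨j₀, hj₀⟩ := hc
  have hlt : Ncnt F j₀ < n / m := lt_of_le_of_ne (h j₀) hj₀
  have : ∑ j, Ncnt F j < ∑ _j : Fin m, n / m := by
    apply Finset.sum_lt_sum (fun j _ => h j) ⟨j₀, mem_univ _, hlt⟩
  simp only [Finset.sum_const, Finset.card_univ, Fintype.card_fin, smul_eq_mul] at this
  omega

/-- repair lemma: there is a balanced map within the excess -/
lemma rep (hm : 0 < m) (hn : 0 < n) (hdvd : m ∣ n) :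
    ∀ e : ℕ, ∀ F : Fin n → Fin m, (∑ j, (Ncnt F j - n / m)) = e →
    ∃ Ψ ∈ Bset m n, distH F Ψ ≤ e := by
  classical
  intro e
  induction e with
  | zero =>
    intro F hF
    refine ⟨F, ?_, by simp [distH]⟩
    have hle : ∀ j, Ncnt F j ≤ n / m := by
      intro j
      have := Finset.sum_eq_zero_iff.mp hF j (mem_univ _)
      omega
    simp only [Bset, mem_filter, mem_univ, true_and]
    exact balanced_of_le hm hdvd F hle
  | succ e ih =>
    intro F hF
    -- find overloaded and underloaded classes
    have hex : ∃ j, n / m < Ncnt F j := by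
      by_contra hc
      push_neg at hc
      have : ∀ j, Ncnt F j - n/m = 0 := fun j => by have := hc j; omega
      rw [Finset.sum_congr rfl (fun j _ => this j)] at hF
      simp at hF
    obtain ⟨j, hj⟩ := hex
    have hex2 : ∃ k, Ncnt F k < n / m := by
      by_contra hc
      push_neg at hc
      have hnm : m * (n / m) = n := Nat.mul_div_cancel' hdvd
      have hsum : ∑ j, Ncnt F j = n := sum_Ncnt F
      have : ∑ _j : Fin m, n / m < ∑ j, Ncnt F j :=
        Finset.sum_lt_sum (fun j _ => hc j) ⟨j, mem_univ _, hj⟩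
      simp only [Finset.sum_const, Finset.card_univ, Fintype.card_fin, smul_eq_mul] at this
      omega
    obtain ⟨k, hk⟩ := hex2
    have hjk : j ≠ k := fun h => by rw [h] at hj; omega
    -- pick i in the fiber of j
    have hfib : (univ.filter (fun i => F i = j)).Nonempty := by
      rw [← Finset.card_pos]; unfold Ncnt at hj; omega
    obtain ⟨i₀, hi₀⟩ := hfib
    simp only [mem_filter, mem_univ, true_and] at hi₀
    set F' := Function.update F i₀ k with hF'
    have hNj : Ncnt F' j = Ncnt F j - 1 := by
      unfold Ncnt
      have : (univ.filter (fun i => F' i = j)) = (univ.filter (fun i => F i = j)).erase i₀ := by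
        ext x
        simp only [mem_filter, mem_univ, true_and, Finset.mem_erase]
        by_cases hx : x = i₀
        · subst hx; simp [hF', Function.update_self, hjk.symm, Ne.symm hjk]
        · simp [hF', Function.update_of_ne hx, hx]
      rw [this, Finset.card_erase_of_mem (by simp [hi₀])]
    have hNk : Ncnt F' k = Ncnt F k + 1 := by
      unfold Ncnt
      have : (univ.filter (fun i => F' i = k)) = insert i₀ (univ.filter (fun i => F i = k)) := by
        ext x
        simp only [mem_filter, mem_univ, true_and, Finset.mem_insert]
        by_cases hx : x = i₀
        · subst hx; simp [hF', Function.update_self]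
        · simp [hF', Function.update_of_ne hx, hx]
      rw [this, Finset.card_insert_of_notMem (by simp [hi₀, hjk])]
    have hNo : ∀ l, l ≠ j → l ≠ k → Ncnt F' l = Ncnt F l := by
      intro l hlj hlk
      unfold Ncnt
      congr 1
      ext x
      simp only [mem_filter, mem_univ, true_and]
      by_cases hx : x = i₀
      · subst hx; simp [hF', Function.update_self, hi₀, Ne.symm hlj, Ne.symm hlk]
      · simp [hF', Function.update_of_ne hx]
    have hsum' : (∑ l, (Ncnt F' l - n / m)) = e := by
      have hsplit : ∀ G : Fin m → ℕ, ∑ l, G l =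
          G j + G k + ∑ l ∈ (univ.erase j).erase k, G l := by
        intro G
        rw [← Finset.add_sum_erase _ _ (mem_univ j), ← Finset.add_sum_erase _ _
          (Finset.mem_erase.mpr ⟨Ne.symm hjk, mem_univ k⟩)]
        ring
      have heq : ∑ l ∈ (univ.erase j).erase k, (Ncnt F' l - n/m)
          = ∑ l ∈ (univ.erase j).erase k, (Ncnt F l - n/m) := by
        apply Finset.sum_congr rfl
        intro l hl
        simp only [Finset.mem_erase] at hl
        rw [hNo l hl.2.1 hl.1]
      rw [hsplit (fun l => Ncnt F l - n/m)] at hF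
      rw [hsplit, heq, hNj, hNk]
      omega
    obtain ⟨Ψ, hΨB, hΨd⟩ := ih F' hsum'
    refine ⟨Ψ, hΨB, ?_⟩
    have h1 : distH F F' ≤ 1 := by
      unfold distH
      have : (univ.filter (fun i => F i ≠ F' i)) ⊆ {i₀} := by
        intro x hx
        simp only [mem_filter, mem_univ, true_and] at hx
        simp only [Finset.mem_singleton]
        by_contra hc
        exact hx (by simp [hF', Function.update_of_ne hc])
      calc _ ≤ ({i₀} : Finset (Fin n)).card := Finset.card_le_card this
        _ = 1 := Finset.card_singleton _
    calc distH F Ψ ≤ distH F F' + distH F' Ψ := distH_triangle F F' Ψ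
      _ ≤ 1 + e := add_le_add h1 hΨd
      _ = e + 1 := by ring

lemma exists_perm_of_balanced (hn : 0 < n) (hdvd : m ∣ n) (Ψ : Fin n → Fin m)
    (hΨ : Ψ ∈ Bset m n) :
    ∃ σ : Equiv.Perm (Fin n), (fun i => dmap m n hn hdvd (σ i)) = Ψ := by
  classical
  have hb : ∀ j, Ncnt Ψ j = n / m := by simpa [Bset] using hΨ
  have hcard : ∀ j, Fintype.card {a // Ψ a = j}
      = Fintype.card {a // dmap m n hn hdvd a = j} := by
    intro j
    rw [Fintype.card_subtype, Fintype.card_subtype]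
    have h1 := hb j
    have h2 := dmap_balanced hn hdvd j
    unfold Ncnt at h1 h2
    omega
  have e : ∀ j, {a // Ψ a = j} ≃ {a // dmap m n hn hdvd a = j} :=
    fun j => Fintype.equivOfCardEq (hcard j)
  refine ⟨((Equiv.sigmaFiberEquiv Ψ).symm.trans ((Equiv.sigmaCongrRight e).trans
    (Equiv.sigmaFiberEquiv (dmap m n hn hdvd)))), ?_⟩
  funext i
  simp only [Equiv.trans_apply, Equiv.sigmaFiberEquiv, Equiv.sigmaCongrRight,
    Equiv.coe_fn_symm_mk, Equiv.coe_fn_mk]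
  exact (e (Ψ i) ⟨i, rfl⟩).2

lemma dmap_comp_perm_balanced (hn : 0 < n) (hdvd : m ∣ n) (g : Equiv.Perm (Fin n)) :
    (fun i => dmap m n hn hdvd (g i)) ∈ Bset m n := by
  classical
  simp only [Bset, mem_filter, mem_univ, true_and]
  intro j
  rw [Ncnt_comp_perm (dmap m n hn hdvd) g j]
  exact dmap_balanced hn hdvd j

/-- total imbalance -/
def Dex (F : Fin n → Fin m) : ℕ := ∑ j, Nat.dist (Ncnt F j) (n / m)

/-- the candidate set for the coupling kernel -/
def Sset (F : Fin n → Fin m) : Finset (Fin n → Fin m) :=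
  (Bset m n).filter (fun Ψ => distH F Ψ ≤ Dex F)

lemma Sset_nonempty (hm : 0 < m) (hn : 0 < n) (hdvd : m ∣ n) (F : Fin n → Fin m) :
    (Sset F).Nonempty := by
  obtain ⟨Ψ, hΨB, hΨd⟩ := rep hm hn hdvd (∑ j, (Ncnt F j - n / m)) F rfl
  refine ⟨Ψ, ?_⟩
  simp only [Sset, mem_filter]
  refine ⟨hΨB, le_trans hΨd ?_⟩
  apply Finset.sum_le_sum
  intro j _
  simp only [Nat.dist]
  omega

lemma Bset_comp_perm (Ψ : Fin n → Fin m) (σ : Equiv.Perm (Fin n)) :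
    (fun i => Ψ (σ i)) ∈ Bset m n ↔ Ψ ∈ Bset m n := by
  simp only [Bset, mem_filter, mem_univ, true_and]
  constructor <;> intro h j
  · rw [← Ncnt_comp_perm Ψ σ j]; exact h j
  · rw [Ncnt_comp_perm Ψ σ j]; exact h j

lemma Dex_comp_perm (F : Fin n → Fin m) (σ : Equiv.Perm (Fin n)) :
    Dex (fun i => F (σ i)) = Dex F := by
  unfold Dex
  exact Finset.sum_congr rfl (fun j _ => by rw [Ncnt_comp_perm])

lemma mem_Sset_comp (F Ψ : Fin n → Fin m) (σ : Equiv.Perm (Fin n)) :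
    (fun i => Ψ (σ i)) ∈ Sset (fun i => F (σ i)) ↔ Ψ ∈ Sset F := by
  simp only [Sset, mem_filter]
  rw [Bset_comp_perm, Dex_comp_perm, distH_comp_perm]

lemma card_Sset_comp (F : Fin n → Fin m) (σ : Equiv.Perm (Fin n)) :
    (Sset (fun i => F (σ i))).card = (Sset F).card := by
  classical
  apply Finset.card_bij (fun Ψ _ => fun i => Ψ (σ.symm i))
  · intro Ψ hΨ
    have hfun : (fun i => Ψ (σ.symm (σ i))) = Ψ := by
      funext i; simp
    rw [← mem_Sset_comp F (fun i => Ψ (σ.symm i)) σ, hfun]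
    exact hΨ
  · intro a _ b _ h
    funext i
    have := congrFun h (σ i)
    simpa using this
  · intro Ψ hΨ
    refine ⟨fun i => Ψ (σ i), (mem_Sset_comp F Ψ σ).mpr hΨ, by funext i; simp⟩

/-- the coupling kernel -/
noncomputable def Tk (F Ψ : Fin n → Fin m) : ℝ :=
  if Ψ ∈ Sset F then ((Sset F).card : ℝ)⁻¹ else 0

lemma Tk_nonneg (F Ψ : Fin n → Fin m) : 0 ≤ Tk F Ψ := by
  unfold Tk; split <;> positivity

lemma Tk_sum (hm : 0 < m) (hn : 0 < n) (hdvd : m ∣ n) (F : Fin n → Fin m) :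
    ∑ Ψ, Tk F Ψ = 1 := by
  classical
  unfold Tk
  rw [Finset.sum_ite_mem, Finset.univ_inter, Finset.sum_const, nsmul_eq_mul]
  have hpos : 0 < (Sset F).card := Finset.card_pos.mpr (Sset_nonempty hm hn hdvd F)
  field_simp

lemma Tk_comp (F Ψ : Fin n → Fin m) (σ : Equiv.Perm (Fin n)) :
    Tk (fun i => F (σ i)) (fun i => Ψ (σ i)) = Tk F Ψ := by
  unfold Tk
  rw [card_Sset_comp]
  congr 1
  simp only [eq_iff_iff]
  exact mem_Sset_comp F Ψ σ

lemma Tk_eq_zero_of_not_balanced (F Ψ : Fin n → Fin m) (h : Ψ ∉ Bset m n) :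
    Tk F Ψ = 0 := by
  unfold Tk
  rw [if_neg]
  intro hc
  exact h (Finset.mem_filter.mp hc).1

lemma Tk_marginal_comp (Ψ : Fin n → Fin m) (σ : Equiv.Perm (Fin n)) :
    ∑ F, Tk F (fun i => Ψ (σ i)) = ∑ F, Tk F Ψ := by
  classical
  have hbij : Function.Bijective (fun (F : Fin n → Fin m) => (fun i => F (σ i))) := by
    constructor
    · intro a b h
      funext i
      have := congrFun h (σ.symm i)
      simpa using this
    · intro b
      exact ⟨fun i => b (σ.symm i), by funext i; simp⟩
  have h1 : ∑ F : Fin n → Fin m, Tk (fun i => F (σ i)) (fun i => Ψ (σ i))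
      = ∑ F : Fin n → Fin m, Tk F (fun i => Ψ (σ i)) :=
    Function.Bijective.sum_comp hbij (fun F => Tk F (fun i => Ψ (σ i)))
  rw [← h1]
  exact Finset.sum_congr rfl (fun F _ => Tk_comp F Ψ σ)

/-- permutation count -/
def cnt (hn : 0 < n) (hdvd : m ∣ n) (Ψ : Fin n → Fin m) : ℕ :=
  (univ.filter (fun g : Equiv.Perm (Fin n) =>
    (fun i => dmap m n hn hdvd (g i)) = Ψ)).card

lemma cnt_sum (hn : 0 < n) (hdvd : m ∣ n) :
    ∑ Ψ : Fin n → Fin m, cnt hn hdvd Ψ = n.factorial := by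
  classical
  unfold cnt
  rw [← Finset.card_eq_sum_card_fiberwise
    (f := fun g : Equiv.Perm (Fin n) => (fun i => dmap m n hn hdvd (g i)))
    (fun x _ => mem_univ _)]
  rw [Finset.card_univ]
  simp [Fintype.card_perm]

lemma cnt_eq_zero_of_not_balanced (hn : 0 < n) (hdvd : m ∣ n) (Ψ : Fin n → Fin m)
    (h : Ψ ∉ Bset m n) : cnt hn hdvd Ψ = 0 := by
  classical
  unfold cnt
  rw [Finset.card_eq_zero, Finset.filter_eq_empty_iff]
  intro g _ hg
  exact h (hg ▸ dmap_comp_perm_balanced hn hdvd g)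

lemma cnt_comp (hn : 0 < n) (hdvd : m ∣ n) (Ψ : Fin n → Fin m) (σ : Equiv.Perm (Fin n)) :
    cnt hn hdvd (fun i => Ψ (σ i)) = cnt hn hdvd Ψ := by
  classical
  unfold cnt
  apply Finset.card_bij (fun g _ => σ.symm.trans g)
  · intro g hg
    simp only [mem_filter, mem_univ, true_and] at hg ⊢
    funext i
    have := congrFun hg (σ.symm i)
    simpa [Equiv.trans_apply] using this
  · intro a _ b _ h
    have : ∀ x, a (σ.symm x) = b (σ.symm x) := fun x => by
      have := congrFun (congrArg (fun (e : Equiv.Perm (Fin n)) => (e : Fin n → Fin n)) h) x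
      simpa [Equiv.trans_apply] using this
    ext x
    have h2 : a x = b x := by simpa using this (σ x)
    rw [h2]
  · intro g hg
    refine ⟨σ.trans g, ?_, ?_⟩
    · simp only [mem_filter, mem_univ, true_and] at hg ⊢
      funext i
      have := congrFun hg (σ i)
      simpa [Equiv.trans_apply] using this
    · ext x
      simp [Equiv.trans_apply]

lemma dmap_mem_Bset (hn : 0 < n) (hdvd : m ∣ n) : dmap m n hn hdvd ∈ Bset m n := by
  simp only [Bset, mem_filter, mem_univ, true_and]
  exact fun j => dmap_balanced hn hdvd j

lemma M_const (hn : 0 < n) (hdvd : m ∣ n) (Ψ : Fin n → Fin m) (hΨ : Ψ ∈ Bset m n) :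
    ∑ F, Tk F Ψ = ∑ F, Tk F (dmap m n hn hdvd) := by
  obtain ⟨σ, hσ⟩ := exists_perm_of_balanced hn hdvd Ψ hΨ
  rw [← hσ]
  exact Tk_marginal_comp (dmap m n hn hdvd) σ

lemma cnt_const (hn : 0 < n) (hdvd : m ∣ n) (Ψ : Fin n → Fin m) (hΨ : Ψ ∈ Bset m n) :
    cnt hn hdvd Ψ = cnt hn hdvd (dmap m n hn hdvd) := by
  obtain ⟨σ, hσ⟩ := exists_perm_of_balanced hn hdvd Ψ hΨ
  rw [← hσ]
  exact cnt_comp hn hdvd (dmap m n hn hdvd) σ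

lemma cnt_fact (hn : 0 < n) (hdvd : m ∣ n) :
    (Bset m n).card * cnt hn hdvd (dmap m n hn hdvd) = n.factorial := by
  classical
  have h1 := cnt_sum hn hdvd
  have h2 : ∑ Ψ : Fin n → Fin m, cnt hn hdvd Ψ = ∑ Ψ ∈ Bset m n, cnt hn hdvd Ψ := by
    symm
    apply Finset.sum_subset (Finset.subset_univ _)
    intro Ψ _ hΨ
    exact cnt_eq_zero_of_not_balanced hn hdvd Ψ hΨ
  have h3 : ∑ Ψ ∈ Bset m n, cnt hn hdvd Ψ
      = (Bset m n).card * cnt hn hdvd (dmap m n hn hdvd) := by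
    rw [Finset.sum_congr rfl (fun Ψ hΨ => cnt_const hn hdvd Ψ hΨ), Finset.sum_const,
      smul_eq_mul]
  omega

lemma M_dmap (hm : 0 < m) (hn : 0 < n) (hdvd : m ∣ n) :
    ((Bset m n).card : ℝ) * ∑ F, Tk F (dmap m n hn hdvd) = (m : ℝ) ^ n := by
  classical
  have h1 : ∑ Ψ : Fin n → Fin m, ∑ F, Tk F Ψ = (m : ℝ) ^ n := by
    rw [Finset.sum_comm]
    rw [Finset.sum_congr rfl (fun F _ => Tk_sum hm hn hdvd F)]
    simp [Finset.card_univ]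
  have h2 : ∑ Ψ : Fin n → Fin m, ∑ F, Tk F Ψ = ∑ Ψ ∈ Bset m n, ∑ F, Tk F Ψ := by
    symm
    apply Finset.sum_subset (Finset.subset_univ _)
    intro Ψ _ hΨ
    exact Finset.sum_eq_zero (fun F _ => Tk_eq_zero_of_not_balanced F Ψ hΨ)
  have h3 : ∑ Ψ ∈ Bset m n, ∑ F, Tk F Ψ
      = ((Bset m n).card : ℝ) * ∑ F, Tk F (dmap m n hn hdvd) := by
    rw [Finset.sum_congr rfl (fun Ψ hΨ => M_const hn hdvd Ψ hΨ), Finset.sum_const,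
      nsmul_eq_mul]
  rw [← h3, ← h2, h1]

lemma marginal2 (hm : 0 < m) (hn : 0 < n) (hdvd : m ∣ n) (Ψ : Fin n → Fin m) :
    ((m : ℝ) ^ n)⁻¹ * ∑ F, Tk F Ψ = (cnt hn hdvd Ψ : ℝ) / (n.factorial : ℝ) := by
  classical
  by_cases hΨ : Ψ ∈ Bset m n
  · have hBpos : 0 < ((Bset m n).card : ℝ) := by
      have : dmap m n hn hdvd ∈ Bset m n := dmap_mem_Bset hn hdvd
      have := Finset.card_pos.mpr ⟨_, this⟩
      exact_mod_cast this
    have hfac : (0:ℝ) < (n.factorial : ℝ) := by exact_mod_cast n.factorial_pos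
    have hmn : (0:ℝ) < (m:ℝ)^n := by positivity
    rw [M_const hn hdvd Ψ hΨ, cnt_const hn hdvd Ψ hΨ]
    have hM := M_dmap hm hn hdvd
    have hc := cnt_fact hn hdvd
    have hc' : ((Bset m n).card : ℝ) * (cnt hn hdvd (dmap m n hn hdvd) : ℝ)
        = (n.factorial : ℝ) := by exact_mod_cast congrArg (Nat.cast : ℕ → ℝ) hc
    field_simp
    nlinarith [hM, hc']
  · rw [Finset.sum_eq_zero (fun F _ => Tk_eq_zero_of_not_balanced F Ψ hΨ),
      cnt_eq_zero_of_not_balanced hn hdvd Ψ hΨ]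
    simp

lemma sum_fn_prod (h : Fin n → Fin m → ℝ) :
    ∑ F : Fin n → Fin m, ∏ i, h i (F i) = ∏ i, ∑ a, h i a := by
  classical
  rw [← Fintype.piFinset_univ]
  exact Finset.sum_prod_piFinset univ h

lemma varsum (hm : 0 < m) (hn : 0 < n) (j : Fin m) :
    ∑ F : Fin n → Fin m, ((Ncnt F j : ℝ) - (n : ℝ) / (m : ℝ)) ^ 2
      = (n : ℝ) * (1 - 1 / (m : ℝ)) * (m : ℝ) ^ (n - 1) := by
  classical
  set gg : Fin m → ℝ := fun a => (if a = j then (1:ℝ) else 0) - 1 / m with hgg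
  have hsum_gg : ∑ a, gg a = 0 := by
    simp only [hgg, Finset.sum_sub_distrib, Finset.sum_ite_eq', mem_univ, if_true,
      Finset.sum_const, Finset.card_univ, Fintype.card_fin, nsmul_eq_mul]
    field_simp
    ring
  have hsum_gg2 : ∑ a, gg a ^ 2 = 1 - 1 / m := by
    have hexp : ∀ a, gg a ^ 2 = (if a = j then (1:ℝ) else 0) - 2 * (1/m) * (if a = j then (1:ℝ) else 0) + 1/m^2 := by
      intro a
      simp only [hgg]
      by_cases h : a = j <;> simp [h] <;> ring
    rw [Finset.sum_congr rfl (fun a _ => hexp a)]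
    simp only [Finset.sum_add_distrib, Finset.sum_sub_distrib, ← Finset.mul_sum,
      Finset.sum_ite_eq', mem_univ, if_true, Finset.sum_const, Finset.card_univ,
      Fintype.card_fin, nsmul_eq_mul]
    have : (m:ℝ) ≠ 0 := Nat.cast_ne_zero.mpr hm.ne'
    field_simp
    ring
  -- decomposition of Ncnt
  have hN : ∀ F : Fin n → Fin m, ((Ncnt F j : ℝ) - (n : ℝ) / (m : ℝ)) = ∑ i, gg (F i) := by
    intro F
    have hcard : (Ncnt F j : ℝ) = ∑ i, (if F i = j then (1:ℝ) else 0) := by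
      unfold Ncnt
      rw [Finset.card_filter]
      push_cast
      simp
    simp only [hgg, Finset.sum_sub_distrib, Finset.sum_const, Finset.card_univ,
      Fintype.card_fin, nsmul_eq_mul, ← hcard]
    ring
  -- cross terms
  have hcross : ∀ i i' : Fin n, i ≠ i' → ∑ F : Fin n → Fin m, gg (F i) * gg (F i') = 0 := by
    intro i i' hne
    have hrw : ∀ F : Fin n → Fin m,
        gg (F i) * gg (F i') = ∏ l, ((if l = i then gg (F l) else 1) * (if l = i' then gg (F l) else 1)) := by
      intro F
      rw [Finset.prod_mul_distrib]
      simp [Finset.prod_ite_eq']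
    have hthis : ∑ F : Fin n → Fin m, ∏ l, ((if l = i then gg (F l) else 1) * (if l = i' then gg (F l) else 1))
        = ∏ l, ∑ a, ((if l = i then gg a else 1) * (if l = i' then gg a else 1)) :=
      sum_fn_prod (fun l a => (if l = i then gg a else 1) * (if l = i' then gg a else 1))
    rw [Finset.sum_congr rfl (fun F _ => hrw F), hthis]
    apply Finset.prod_eq_zero (mem_univ i)
    simp only [if_pos rfl, if_neg hne]
    simpa using hsum_gg
  -- diagonal terms
  have hdiag : ∀ i : Fin n, ∑ F : Fin n → Fin m, gg (F i) ^ 2 = (1 - 1/m) * (m:ℝ) ^ (n - 1) := by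
    intro i
    have hrw : ∀ F : Fin n → Fin m,
        gg (F i) ^ 2 = ∏ l, (if l = i then gg (F l) ^ 2 else 1) := by
      intro F
      simp [Finset.prod_ite_eq']
    have hfac : ∑ F : Fin n → Fin m, ∏ l, (if l = i then gg (F l) ^ 2 else 1)
        = ∏ l, ∑ a, (if l = i then gg a ^ 2 else 1) :=
      sum_fn_prod (fun l a => if l = i then gg a ^ 2 else 1)
    rw [Finset.sum_congr rfl (fun F _ => hrw F), hfac]
    have hterm : ∀ l : Fin n, (∑ a, (if l = i then gg a ^ 2 else 1) : ℝ)
        = if l = i then (1 - 1/(m:ℝ)) else (m:ℝ) := by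
      intro l
      by_cases h : l = i <;> simp [h, hsum_gg2, Finset.card_univ]
    rw [Finset.prod_congr rfl (fun l _ => hterm l)]
    rw [← Finset.mul_prod_erase univ _ (mem_univ i), if_pos rfl]
    congr 1
    rw [Finset.prod_congr rfl (fun l hl => if_neg (Finset.mem_erase.mp hl).1)]
    rw [Finset.prod_const, Finset.card_erase_of_mem (mem_univ i), Finset.card_univ,
      Fintype.card_fin]
  -- put together
  calc ∑ F : Fin n → Fin m, ((Ncnt F j : ℝ) - (n : ℝ) / (m : ℝ)) ^ 2
      = ∑ F : Fin n → Fin m, ∑ i, ∑ i', gg (F i) * gg (F i') := by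
        apply Finset.sum_congr rfl
        intro F _
        rw [hN F, sq, Finset.sum_mul_sum]
    _ = ∑ i, ∑ i', ∑ F : Fin n → Fin m, gg (F i) * gg (F i') := by
        rw [Finset.sum_comm]
        apply Finset.sum_congr rfl
        intro i _
        rw [Finset.sum_comm]
    _ = ∑ i : Fin n, (1 - 1/(m:ℝ)) * (m:ℝ) ^ (n - 1) := by
        apply Finset.sum_congr rfl
        intro i _
        rw [Finset.sum_eq_single i]
        · rw [← hdiag i]
          exact Finset.sum_congr rfl (fun F _ => by rw [sq])
        · intro i' _ hne
          exact hcross i i' (Ne.symm hne)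
        · intro h; exact absurd (mem_univ i) h
    _ = (n : ℝ) * (1 - 1 / (m : ℝ)) * (m : ℝ) ^ (n - 1) := by
        rw [Finset.sum_const, Finset.card_univ, Fintype.card_fin, nsmul_eq_mul]
        ring

lemma natdist_cast (a b : ℕ) : ((Nat.dist a b : ℕ) : ℝ) = |(a : ℝ) - (b : ℝ)| := by
  rcases le_total a b with h | h
  · rw [Nat.dist_eq_sub_of_le h, abs_sub_comm,
      abs_of_nonneg (by simp [sub_nonneg]; exact_mod_cast h)]
    push_cast [h]
    ring
  · rw [Nat.dist_eq_sub_of_le_right h,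
      abs_of_nonneg (by simp [sub_nonneg]; exact_mod_cast h)]
    push_cast [h]
    ring

lemma sum_w0 (hm : 0 < m) : ∑ _F : Fin n → Fin m, ((m:ℝ)^n)⁻¹ = 1 := by
  classical
  rw [Finset.sum_const, Finset.card_univ, nsmul_eq_mul]
  rw [Fintype.card_fun]
  simp only [Fintype.card_fin]
  have : ((m:ℝ))^n ≠ 0 := by positivity
  push_cast
  field_simp

lemma Dex_expect (hm : 0 < m) (hn : 0 < n) (hdvd : m ∣ n) :
    ∑ F : Fin n → Fin m, ((m:ℝ)^n)⁻¹ * (Dex F : ℝ)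
      ≤ Real.sqrt ((n:ℝ) * ((m:ℝ) - 1)) := by
  classical
  have hm0 : ((m:ℝ)) ≠ 0 := Nat.cast_ne_zero.mpr hm.ne'
  have hmu : ((n / m : ℕ) : ℝ) = (n : ℝ) / (m : ℝ) := Nat.cast_div hdvd hm0
  have hDex : ∀ F : Fin n → Fin m, (Dex F : ℝ) = ∑ j, |(Ncnt F j : ℝ) - (n:ℝ)/(m:ℝ)| := by
    intro F
    unfold Dex
    push_cast [natdist_cast]
    rw [hmu]
  have hswap : ∑ F : Fin n → Fin m, ((m:ℝ)^n)⁻¹ * (Dex F : ℝ)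
      = ∑ j : Fin m, ∑ F : Fin n → Fin m, ((m:ℝ)^n)⁻¹ * |(Ncnt F j : ℝ) - (n:ℝ)/(m:ℝ)| := by
    rw [Finset.sum_comm]
    apply Finset.sum_congr rfl
    intro F _
    rw [hDex F, Finset.mul_sum]
  rw [hswap]
  -- per-class bound
  have hperj : ∀ j : Fin m, ∑ F : Fin n → Fin m, ((m:ℝ)^n)⁻¹ * |(Ncnt F j : ℝ) - (n:ℝ)/(m:ℝ)|
      ≤ Real.sqrt ((n:ℝ) * ((m:ℝ) - 1)) / (m:ℝ) := by
    intro j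
    set w0 : ℝ := ((m:ℝ)^n)⁻¹ with hw0
    have hw0nn : 0 ≤ w0 := by positivity
    set x : (Fin n → Fin m) → ℝ := fun F => (Ncnt F j : ℝ) - (n:ℝ)/(m:ℝ) with hx
    -- Cauchy-Schwarz
    have hCS : (∑ F : Fin n → Fin m, w0 * |x F|)^2
        ≤ (∑ F : Fin n → Fin m, w0) * (∑ F : Fin n → Fin m, w0 * (x F)^2) := by
      have := Finset.sum_mul_sq_le_sq_mul_sq Finset.univ
        (fun F : Fin n → Fin m => Real.sqrt w0)
        (fun F : Fin n → Fin m => Real.sqrt w0 * |x F|)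
      have h1 : ∀ F : Fin n → Fin m, Real.sqrt w0 * (Real.sqrt w0 * |x F|) = w0 * |x F| := by
        intro F
        rw [← mul_assoc, Real.mul_self_sqrt hw0nn]
      have h2 : ∀ F : Fin n → Fin m, (Real.sqrt w0)^2 = w0 := fun _ => Real.sq_sqrt hw0nn
      have h3 : ∀ F : Fin n → Fin m, (Real.sqrt w0 * |x F|)^2 = w0 * (x F)^2 := by
        intro F
        rw [mul_pow, Real.sq_sqrt hw0nn, sq_abs]
      calc (∑ F : Fin n → Fin m, w0 * |x F|)^2
          = (∑ F : Fin n → Fin m, Real.sqrt w0 * (Real.sqrt w0 * |x F|))^2 := by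
            rw [Finset.sum_congr rfl (fun F _ => (h1 F).symm)]
        _ ≤ (∑ F : Fin n → Fin m, (Real.sqrt w0)^2) * (∑ F : Fin n → Fin m, (Real.sqrt w0 * |x F|)^2) := this
        _ = (∑ F : Fin n → Fin m, w0) * (∑ F : Fin n → Fin m, w0 * (x F)^2) := by
            rw [Finset.sum_congr rfl (fun F _ => h2 F), Finset.sum_congr rfl (fun F _ => h3 F)]
    rw [sum_w0 hm, one_mul] at hCS
    -- variance value
    have hvar : ∑ F : Fin n → Fin m, w0 * (x F)^2 = (n:ℝ) * ((m:ℝ) - 1) / (m:ℝ)^2 := by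
      rw [← Finset.mul_sum, hx]
      simp only
      rw [varsum hm hn j, hw0]
      have hpow : ((m:ℝ))^n = (m:ℝ)^(n-1) * (m:ℝ) := by
        rw [← pow_succ]
        congr 1
        omega
      rw [hpow]
      have hne : ((m:ℝ))^(n-1) ≠ 0 := by positivity
      field_simp
    rw [hvar] at hCS
    -- conclude by sqrt monotonicity
    have hnn : 0 ≤ ∑ F : Fin n → Fin m, w0 * |x F| :=
      Finset.sum_nonneg (fun F _ => mul_nonneg hw0nn (abs_nonneg _))
    have hmle : (1:ℝ) ≤ (m:ℝ) := by exact_mod_cast hm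
    have h4 : ∑ F : Fin n → Fin m, w0 * |x F|
        ≤ Real.sqrt ((n:ℝ) * ((m:ℝ) - 1) / (m:ℝ)^2) := by
      have := Real.sqrt_le_sqrt hCS
      rwa [Real.sqrt_sq hnn] at this
    have h5 : Real.sqrt ((n:ℝ) * ((m:ℝ) - 1) / (m:ℝ)^2)
        = Real.sqrt ((n:ℝ) * ((m:ℝ) - 1)) / (m:ℝ) := by
      rw [Real.sqrt_div (by nlinarith : (0:ℝ) ≤ (n:ℝ) * ((m:ℝ) - 1)) ((m:ℝ)^2)]
      congr 1
      rw [Real.sqrt_sq (by positivity)]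
    exact h4.trans_eq h5
  calc ∑ j : Fin m, ∑ F : Fin n → Fin m, ((m:ℝ)^n)⁻¹ * |(Ncnt F j : ℝ) - (n:ℝ)/(m:ℝ)|
      ≤ ∑ _j : Fin m, Real.sqrt ((n:ℝ) * ((m:ℝ) - 1)) / (m:ℝ) :=
        Finset.sum_le_sum (fun j _ => hperj j)
    _ = Real.sqrt ((n:ℝ) * ((m:ℝ) - 1)) := by
        rw [Finset.sum_const, Finset.card_univ, Fintype.card_fin, nsmul_eq_mul]
        field_simp

theorem stmt5 (m n : ℕ) (hm : 1 ≤ m) (hn : 1 ≤ n) (hdvd : m ∣ n) :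
    ∃ w : (Fin n → Fin m) × (Fin n → Fin m) → ℝ,
      (∀ p, 0 ≤ w p) ∧
      (∑ p : (Fin n → Fin m) × (Fin n → Fin m), w p = 1) ∧
      (∀ F : Fin n → Fin m, ∑ Ψ : Fin n → Fin m, w (F, Ψ) = ((m : ℝ) ^ n)⁻¹) ∧
      (∀ Ψ : Fin n → Fin m, ∑ F : Fin n → Fin m, w (F, Ψ) =
        ((Finset.univ.filter (fun g : Equiv.Perm (Fin n) =>
            (fun i => dmap m n hn hdvd (g i)) = Ψ)).card : ℝ) / (Nat.factorial n : ℝ)) ∧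
      (∑ p : (Fin n → Fin m) × (Fin n → Fin m),
          w p * (((Finset.univ.filter (fun i : Fin n => p.1 i ≠ p.2 i)).card : ℝ) / (n : ℝ))
        ≤ Real.sqrt ((m : ℝ) ^ 2 * ((m : ℝ) - 1) / (n : ℝ))) := by
  classical
  have hm' : 0 < m := hm
  have hn' : 0 < n := hn
  refine ⟨fun p => ((m:ℝ)^n)⁻¹ * Tk p.1 p.2, ?_, ?_, ?_, ?_, ?_⟩
  · intro p
    exact mul_nonneg (by positivity) (Tk_nonneg p.1 p.2)
  · rw [Fintype.sum_prod_type]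
    calc ∑ F : Fin n → Fin m, ∑ Ψ : Fin n → Fin m, ((m:ℝ)^n)⁻¹ * Tk F Ψ
        = ∑ F : Fin n → Fin m, ((m:ℝ)^n)⁻¹ := by
          apply Finset.sum_congr rfl
          intro F _
          rw [← Finset.mul_sum, Tk_sum hm' hn' hdvd F, mul_one]
      _ = 1 := sum_w0 hm'
  · intro F
    rw [← Finset.mul_sum, Tk_sum hm' hn' hdvd F, mul_one]
  · intro Ψ
    rw [← Finset.mul_sum]
    exact marginal2 hm' hn' hdvd Ψ
  · have hstep1 : ∑ p : (Fin n → Fin m) × (Fin n → Fin m),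
        ((m:ℝ)^n)⁻¹ * Tk p.1 p.2 * ((distH p.1 p.2 : ℝ) / (n : ℝ))
        ≤ ∑ F : Fin n → Fin m, ((m:ℝ)^n)⁻¹ * ((Dex F : ℝ) / (n : ℝ)) := by
      rw [Fintype.sum_prod_type]
      apply Finset.sum_le_sum
      intro F _
      calc ∑ Ψ : Fin n → Fin m, ((m:ℝ)^n)⁻¹ * Tk F Ψ * ((distH F Ψ : ℝ) / (n : ℝ))
          ≤ ∑ Ψ : Fin n → Fin m, ((m:ℝ)^n)⁻¹ * Tk F Ψ * ((Dex F : ℝ) / (n : ℝ)) := by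
            apply Finset.sum_le_sum
            intro Ψ _
            by_cases hΨ : Ψ ∈ Sset F
            · apply mul_le_mul_of_nonneg_left
              · refine (div_le_div_iff_of_pos_right (by positivity : (0:ℝ) < (n:ℝ))).mpr ?_
                have hd := (Finset.mem_filter.mp hΨ).2
                exact_mod_cast hd
              · exact mul_nonneg (by positivity) (Tk_nonneg F Ψ)
            · unfold Tk
              rw [if_neg hΨ]
              simp
        _ = ((m:ℝ)^n)⁻¹ * ((Dex F : ℝ) / (n : ℝ)) := by
            rw [← Finset.sum_mul, ← Finset.mul_sum, Tk_sum hm' hn' hdvd F, mul_one]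
    have hstep2 : ∑ F : Fin n → Fin m, ((m:ℝ)^n)⁻¹ * ((Dex F : ℝ) / (n : ℝ))
        ≤ Real.sqrt ((n:ℝ) * ((m:ℝ) - 1)) / (n : ℝ) := by
      have := Dex_expect hm' hn' hdvd
      calc ∑ F : Fin n → Fin m, ((m:ℝ)^n)⁻¹ * ((Dex F : ℝ) / (n : ℝ))
          = (∑ F : Fin n → Fin m, ((m:ℝ)^n)⁻¹ * (Dex F : ℝ)) / (n : ℝ) := by
            rw [Finset.sum_div]
            apply Finset.sum_congr rfl
            intro F _
            ring
        _ ≤ Real.sqrt ((n:ℝ) * ((m:ℝ) - 1)) / (n : ℝ) :=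
            (div_le_div_iff_of_pos_right (by positivity : (0:ℝ) < (n:ℝ))).mpr this
    have hstep3 : Real.sqrt ((n:ℝ) * ((m:ℝ) - 1)) / (n : ℝ)
        ≤ Real.sqrt ((m : ℝ) ^ 2 * ((m : ℝ) - 1) / (n : ℝ)) := by
      have hn0 : ((n:ℝ)) ≠ 0 := by positivity
      have hmle : (1:ℝ) ≤ (m:ℝ) := by exact_mod_cast hm
      have hnn : (1:ℝ) ≤ (n:ℝ) := by exact_mod_cast hn
      have hx : (0:ℝ) ≤ (n:ℝ) * ((m:ℝ) - 1) := by nlinarith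
      have h1 : Real.sqrt ((n:ℝ) * ((m:ℝ) - 1)) / (n : ℝ)
          = Real.sqrt ((n:ℝ) * ((m:ℝ) - 1) / (n:ℝ)^2) := by
        rw [Real.sqrt_div hx ((n:ℝ)^2), Real.sqrt_sq (by positivity)]
      rw [h1]
      apply Real.sqrt_le_sqrt
      rw [div_le_div_iff₀ (by positivity) (by positivity)]
      have hm2 : (1:ℝ) ≤ (m:ℝ)^2 := by nlinarith
      nlinarith [mul_nonneg (mul_nonneg (sub_nonneg.mpr hmle) (sq_nonneg (n:ℝ)))
        (sub_nonneg.mpr hm2)]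
    calc ∑ p : (Fin n → Fin m) × (Fin n → Fin m),
        ((m:ℝ)^n)⁻¹ * Tk p.1 p.2 * (((Finset.univ.filter (fun i : Fin n => p.1 i ≠ p.2 i)).card : ℝ) / (n : ℝ))
        = ∑ p : (Fin n → Fin m) × (Fin n → Fin m),
          ((m:ℝ)^n)⁻¹ * Tk p.1 p.2 * ((distH p.1 p.2 : ℝ) / (n : ℝ)) := rfl
      _ ≤ Real.sqrt ((m : ℝ) ^ 2 * ((m : ℝ) - 1) / (n : ℝ)) :=
          le_trans hstep1 (le_trans hstep2 hstep3)
end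

section
/- Let n, m ≥ 1 be integers, let f, h : Fin n → Fin m be maps, and let x : Fin n → ℝ. Then: (i) ‖T_f x‖₁ ≤ ‖x‖₁; and (ii) (1/n!) · ∑_{g ∈ Perm(Fin n)} ‖T_f (x ∘ g) − T_h (x ∘ g)‖₁ ≤ 2 · (#{j ∈ Fin n : f(j) ≠ h(j)} / n) · ‖x‖₁. In particular min over permutations g of ‖T_f(x∘g) − T_h(x∘g)‖₁ is bounded by the same quantity. -/
/-- The binning operator: `(T_f x)(i) = ∑_{j : f j = i} x j`. -/
noncomputable def binOp {n m : ℕ} (f : Fin n → Fin m) (x : Fin n → ℝ) : Fin m → ℝ :=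
  fun i => ∑ j ∈ Finset.univ.filter (fun j => f j = i), x j

lemma binOp_abs_le {n m : ℕ} (f : Fin n → Fin m) (y : Fin n → ℝ) :
    ∑ i, |binOp f y i| ≤ ∑ j, |y j| := by
  calc ∑ i, |binOp f y i|
      ≤ ∑ i, ∑ j ∈ Finset.univ.filter (fun j => f j = i), |y j| :=
        Finset.sum_le_sum fun i _ => Finset.abs_sum_le_sum_abs _ _
    _ = ∑ j, |y j| := Finset.sum_fiberwise _ _ _

lemma binOp_diff_le {n m : ℕ} (f h : Fin n → Fin m) (y : Fin n → ℝ) :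
    ∑ i, |binOp f y i - binOp h y i| ≤
      2 * ∑ j ∈ Finset.univ.filter (fun j : Fin n => f j ≠ h j), |y j| := by
  have key : ∀ i, binOp f y i - binOp h y i =
      ∑ j, ((if f j = i then y j else 0) - (if h j = i then y j else 0)) := by
    intro i
    rw [Finset.sum_sub_distrib]
    simp [binOp, Finset.sum_filter]
  calc ∑ i, |binOp f y i - binOp h y i|
      ≤ ∑ i, ∑ j, |(if f j = i then y j else 0) - (if h j = i then y j else 0)| := by
        refine Finset.sum_le_sum fun i _ => ?_
        rw [key i]; exact Finset.abs_sum_le_sum_abs _ _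
    _ = ∑ j, ∑ i, |(if f j = i then y j else 0) - (if h j = i then y j else 0)| :=
        Finset.sum_comm
    _ ≤ ∑ j, (if f j ≠ h j then 2 * |y j| else 0) := by
        refine Finset.sum_le_sum fun j _ => ?_
        by_cases hj : f j = h j
        · simp [hj]
        · simp only [ne_eq, hj, not_false_iff, if_true]
          have hb : ∀ i : Fin m,
              |(if f j = i then y j else 0) - (if h j = i then y j else 0)| ≤
                (if f j = i then |y j| else 0) + (if h j = i then |y j| else 0) := by
            intro i
            have := abs_sub (if f j = i then y j else 0) (if h j = i then y j else 0)
            calc |(if f j = i then y j else 0) - (if h j = i then y j else 0)|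
                ≤ |(if f j = i then y j else 0)| + |(if h j = i then y j else 0)| := by
                  rw [sub_eq_add_neg]
                  exact (abs_add_le _ _).trans (by rw [abs_neg])
              _ = (if f j = i then |y j| else 0) + (if h j = i then |y j| else 0) := by
                  simp [apply_ite abs]
          calc ∑ i, |(if f j = i then y j else 0) - (if h j = i then y j else 0)|
              ≤ ∑ i, ((if f j = i then |y j| else 0) + (if h j = i then |y j| else 0)) :=
                Finset.sum_le_sum fun i _ => hb i
            _ = 2 * |y j| := by
                rw [Finset.sum_add_distrib, Finset.sum_ite_eq, Finset.sum_ite_eq]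
                simp only [Finset.mem_univ, if_true]
                ring
    _ = 2 * ∑ j ∈ Finset.univ.filter (fun j : Fin n => f j ≠ h j), |y j| := by
        rw [Finset.mul_sum, Finset.sum_filter]

lemma perm_sum {n : ℕ} (j : Fin n) (F : Fin n → ℝ) :
    ∃ c : ℕ, 0 < c ∧ c * n = Nat.factorial n ∧
      ∑ g : Equiv.Perm (Fin n), F (g j) = c * ∑ k, F k := by
  classical
  set c := (Finset.univ.filter (fun g : Equiv.Perm (Fin n) => g j = j)).card with hc
  have fiber : ∀ k : Fin n,
      (Finset.univ.filter (fun g : Equiv.Perm (Fin n) => g j = k)).card = c := by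
    intro k
    rw [hc]
    refine Finset.card_bij' (fun g _ => Equiv.swap j k * g) (fun g _ => Equiv.swap j k * g)
      ?_ ?_ ?_ ?_
    · intro g hg
      simp only [Finset.mem_filter, Finset.mem_univ, true_and] at hg ⊢
      simp [Equiv.Perm.mul_apply, hg]
    · intro g hg
      simp only [Finset.mem_filter, Finset.mem_univ, true_and] at hg ⊢
      simp [Equiv.Perm.mul_apply, hg]
    · intro g _
      simp [← mul_assoc]
    · intro g _
      simp [← mul_assoc]
  have hcpos : 0 < c := by
    rw [hc]
    refine Finset.card_pos.mpr ⟨1, ?_⟩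
    simp
  have hcn : c * n = Nat.factorial n := by
    have h1 : (Finset.univ : Finset (Equiv.Perm (Fin n))).card =
        ∑ k : Fin n, (Finset.univ.filter (fun g : Equiv.Perm (Fin n) => g j = k)).card :=
      Finset.card_eq_sum_card_fiberwise (fun g _ => Finset.mem_univ _)
    have h2 : (Finset.univ : Finset (Equiv.Perm (Fin n))).card = Nat.factorial n := by
      simp [Finset.card_univ, Fintype.card_perm]
    have h3 : ∑ k : Fin n, (Finset.univ.filter
        (fun g : Equiv.Perm (Fin n) => g j = k)).card = n * c := by
      simp [fiber, Finset.sum_const, Finset.card_univ, mul_comm]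
    rw [mul_comm, ← h3, ← h1, h2]
  refine ⟨c, hcpos, hcn, ?_⟩
  have := Finset.sum_fiberwise (Finset.univ : Finset (Equiv.Perm (Fin n)))
    (fun g => g j) (fun g => F (g j))
  rw [← this]
  rw [Finset.mul_sum]
  refine Finset.sum_congr rfl fun k _ => ?_
  have : ∑ g ∈ Finset.univ.filter (fun g : Equiv.Perm (Fin n) => g j = k), F (g j) =
      ∑ g ∈ Finset.univ.filter (fun g : Equiv.Perm (Fin n) => g j = k), F k := by
    refine Finset.sum_congr rfl fun g hg => ?_
    simp only [Finset.mem_filter] at hg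
    rw [hg.2]
  rw [this, Finset.sum_const, fiber k, nsmul_eq_mul]

theorem stmt6 (n m : ℕ) (hn : 1 ≤ n) (hm : 1 ≤ m) (f h : Fin n → Fin m) (x : Fin n → ℝ) :
    (∑ i, |binOp f x i| ≤ ∑ j, |x j|) ∧
    ((Nat.factorial n : ℝ)⁻¹ *
        ∑ g : Equiv.Perm (Fin n),
          ∑ i, |binOp f (fun j => x (g j)) i - binOp h (fun j => x (g j)) i|
      ≤ 2 * (((Finset.univ.filter (fun j : Fin n => f j ≠ h j)).card : ℝ) / (n : ℝ)) *
          ∑ j, |x j|) ∧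
    (∃ g : Equiv.Perm (Fin n),
      ∑ i, |binOp f (fun j => x (g j)) i - binOp h (fun j => x (g j)) i|
        ≤ 2 * (((Finset.univ.filter (fun j : Fin n => f j ≠ h j)).card : ℝ) / (n : ℝ)) *
            ∑ j, |x j|) := by
  classical
  set D := Finset.univ.filter (fun j : Fin n => f j ≠ h j) with hD
  have part1 := binOp_abs_le f x
  -- part 2
  have part2 : (Nat.factorial n : ℝ)⁻¹ *
        ∑ g : Equiv.Perm (Fin n),
          ∑ i, |binOp f (fun j => x (g j)) i - binOp h (fun j => x (g j)) i|
      ≤ 2 * ((D.card : ℝ) / (n : ℝ)) * ∑ j, |x j| := by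
    have step1 : ∑ g : Equiv.Perm (Fin n),
          ∑ i, |binOp f (fun j => x (g j)) i - binOp h (fun j => x (g j)) i|
        ≤ ∑ g : Equiv.Perm (Fin n), 2 * ∑ j ∈ D, |x (g j)| :=
      Finset.sum_le_sum fun g _ => binOp_diff_le f h _
    have swap : ∑ g : Equiv.Perm (Fin n), 2 * ∑ j ∈ D, |x (g j)| =
        2 * ∑ j ∈ D, ∑ g : Equiv.Perm (Fin n), |x (g j)| := by
      rw [← Finset.mul_sum, Finset.sum_comm]
    obtain ⟨j0, hj0⟩ : ∃ j0 : Fin n, True := ⟨⟨0, hn⟩, trivial⟩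
    obtain ⟨c, hcpos, hcn, _⟩ := perm_sum j0 (fun k => |x k|)
    have inner : ∀ j : Fin n, ∑ g : Equiv.Perm (Fin n), |x (g j)| = c * ∑ k, |x k| := by
      intro j
      obtain ⟨c', hc'pos, hc'n, hsum⟩ := perm_sum j (fun k => |x k|)
      have : c' = c :=
        Nat.eq_of_mul_eq_mul_right (Fin.pos j) (hc'n.trans hcn.symm)
      rw [hsum, this]
    have total : ∑ j ∈ D, ∑ g : Equiv.Perm (Fin n), |x (g j)| =
        (D.card : ℝ) * (c * ∑ k, |x k|) := by
      rw [Finset.sum_congr rfl fun j _ => inner j, Finset.sum_const, nsmul_eq_mul]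
    have hfac : (Nat.factorial n : ℝ) = (c : ℝ) * (n : ℝ) := by
      rw [← hcn]; push_cast; ring
    have hnpos : (0 : ℝ) < n := by exact_mod_cast hn
    have hcR : (0 : ℝ) < c := by exact_mod_cast hcpos
    calc (Nat.factorial n : ℝ)⁻¹ *
          ∑ g : Equiv.Perm (Fin n),
            ∑ i, |binOp f (fun j => x (g j)) i - binOp h (fun j => x (g j)) i|
        ≤ (Nat.factorial n : ℝ)⁻¹ * (2 * ((D.card : ℝ) * (c * ∑ k, |x k|))) := by
          refine mul_le_mul_of_nonneg_left ?_ (by positivity)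
          rw [← total, ← swap]
          exact step1
      _ = 2 * ((D.card : ℝ) / (n : ℝ)) * ∑ k, |x k| := by
          rw [hfac]
          field_simp
  refine ⟨part1, part2, ?_⟩
  -- part 3
  by_contra hcon
  push_neg at hcon
  have hfacpos : (0 : ℝ) < (Nat.factorial n : ℝ) := by
    exact_mod_cast Nat.factorial_pos n
  have hlt : (Nat.factorial n : ℝ) * (2 * ((D.card : ℝ) / (n : ℝ)) * ∑ j, |x j|) <
      ∑ g : Equiv.Perm (Fin n),
        ∑ i, |binOp f (fun j => x (g j)) i - binOp h (fun j => x (g j)) i| := by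
    have hcard : (Finset.univ : Finset (Equiv.Perm (Fin n))).card = Nat.factorial n := by
      simp [Finset.card_univ, Fintype.card_perm]
    calc (Nat.factorial n : ℝ) * (2 * ((D.card : ℝ) / (n : ℝ)) * ∑ j, |x j|)
        = ∑ _g : Equiv.Perm (Fin n), 2 * ((D.card : ℝ) / (n : ℝ)) * ∑ j, |x j| := by
          rw [Finset.sum_const, hcard, nsmul_eq_mul]
      _ < ∑ g : Equiv.Perm (Fin n),
            ∑ i, |binOp f (fun j => x (g j)) i - binOp h (fun j => x (g j)) i| := by
          refine Finset.sum_lt_sum_of_nonempty Finset.univ_nonempty fun g _ => hcon g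
  have : 2 * ((D.card : ℝ) / (n : ℝ)) * ∑ j, |x j| <
      (Nat.factorial n : ℝ)⁻¹ *
        ∑ g : Equiv.Perm (Fin n),
          ∑ i, |binOp f (fun j => x (g j)) i - binOp h (fun j => x (g j)) i| := by
    rw [lt_inv_mul_iff₀ hfacpos] at *
    exact hlt
  exact absurd part2 (not_le.mpr this)
end

section
/- Fix integers d, n, m ≥ 1 and maps f, h : Fin n → Fin m. For an array X : (Fin d → Fin n) → ℝ define the binning operator T_f^{(d)} X : (Fin d → Fin m) → ℝ by (T_f^{(d)} X)(a) = ∑_{j : Fin d → Fin n with f ∘ j = a} X(j), and for a permutation g of Fin n define (g·X)(j) = X(g ∘ j). With ‖·‖₁ the sum of the absolute values of all entries of an array, the following hold: (i) ‖T_f^{(d)} X‖₁ ≤ ‖X‖₁; and (ii) (1/n!) · ∑_{g ∈ Perm(Fin n)} ‖T_f^{(d)}(g·X) − T_h^{(d)}(g·X)‖₁ ≤ 2d · (#{j ∈ Fin n : f(j) ≠ h(j)} / n) · ‖X‖₁. -/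
open Finset

/-- The `d`-fold binning operator on arrays:
`(T_f^{(d)} X)(a) = ∑_{j : f ∘ j = a} X j`. -/
noncomputable def binOpD {d n m : ℕ} (f : Fin n → Fin m)
    (X : (Fin d → Fin n) → ℝ) : (Fin d → Fin m) → ℝ :=
  fun a => ∑ j ∈ Finset.univ.filter (fun j : Fin d → Fin n => f ∘ j = a), X j

lemma binOpD_contraction {d n m : ℕ} (f : Fin n → Fin m) (X : (Fin d → Fin n) → ℝ) :
    ∑ a : Fin d → Fin m, |binOpD f X a| ≤ ∑ j : Fin d → Fin n, |X j| := by
  calc ∑ a : Fin d → Fin m, |binOpD f X a|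
      ≤ ∑ a : Fin d → Fin m, ∑ j ∈ univ.filter (fun j : Fin d → Fin n => f ∘ j = a), |X j| :=
        Finset.sum_le_sum fun a _ => Finset.abs_sum_le_sum_abs _ _
    _ = ∑ j : Fin d → Fin n, |X j| := Finset.sum_fiberwise _ _ _

lemma binOpD_diff_bound {d n m : ℕ} (f h : Fin n → Fin m) (X : (Fin d → Fin n) → ℝ) :
    ∑ a : Fin d → Fin m, |binOpD f X a - binOpD h X a|
      ≤ 2 * ∑ j ∈ univ.filter (fun j : Fin d → Fin n => f ∘ j ≠ h ∘ j), |X j| := by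
  set D := univ.filter (fun j : Fin d → Fin n => f ∘ j ≠ h ∘ j) with hD
  have key : ∀ a : Fin d → Fin m, binOpD f X a - binOpD h X a
      = (∑ j ∈ D.filter (fun j => f ∘ j = a), X j)
        - (∑ j ∈ D.filter (fun j => h ∘ j = a), X j) := by
    intro a
    have hf : binOpD f X a
        = (∑ j ∈ (univ.filter (fun j : Fin d → Fin n => f ∘ j = a)).filter
            (fun j => f ∘ j = h ∘ j), X j)
          + ∑ j ∈ D.filter (fun j => f ∘ j = a), X j := by
      rw [binOpD, ← Finset.sum_filter_add_sum_filter_not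
        (univ.filter (fun j : Fin d → Fin n => f ∘ j = a)) (fun j => f ∘ j = h ∘ j)]
      congr 1
      refine Finset.sum_congr ?_ fun _ _ => rfl
      ext j
      simp only [hD, Finset.mem_filter, Finset.mem_univ, true_and]
      tauto
    have hh : binOpD h X a
        = (∑ j ∈ (univ.filter (fun j : Fin d → Fin n => f ∘ j = a)).filter
            (fun j => f ∘ j = h ∘ j), X j)
          + ∑ j ∈ D.filter (fun j => h ∘ j = a), X j := by
      rw [binOpD, ← Finset.sum_filter_add_sum_filter_not
        (univ.filter (fun j : Fin d → Fin n => h ∘ j = a)) (fun j => f ∘ j = h ∘ j)]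
      congr 1
      · apply Finset.sum_congr _ (fun _ _ => rfl)
        ext j
        simp only [Finset.mem_filter, Finset.mem_univ, true_and]
        constructor
        · rintro ⟨h1, h2⟩; exact ⟨h2 ▸ h1, h2⟩
        · rintro ⟨h1, h2⟩; exact ⟨h2 ▸ h1, h2⟩
      · refine Finset.sum_congr ?_ fun _ _ => rfl
        ext j
        simp only [hD, Finset.mem_filter, Finset.mem_univ, true_and]
        tauto
    rw [hf, hh]; ring
  calc ∑ a : Fin d → Fin m, |binOpD f X a - binOpD h X a|
      ≤ ∑ a : Fin d → Fin m,
          ((∑ j ∈ D.filter (fun j => f ∘ j = a), |X j|)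
            + ∑ j ∈ D.filter (fun j => h ∘ j = a), |X j|) := by
        refine Finset.sum_le_sum fun a _ => ?_
        rw [key a]
        refine (abs_sub _ _).trans ?_
        exact add_le_add (Finset.abs_sum_le_sum_abs _ _) (Finset.abs_sum_le_sum_abs _ _)
    _ = (∑ j ∈ D, |X j|) + ∑ j ∈ D, |X j| := by
        rw [Finset.sum_add_distrib, Finset.sum_fiberwise, Finset.sum_fiberwise]
    _ = 2 * ∑ j ∈ D, |X j| := by ring

noncomputable def indfh {n m : ℕ} (f h : Fin n → Fin m) : Fin n → ℝ :=
  fun v => if f v = h v then 0 else 1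

lemma indfh_nonneg {n m : ℕ} (f h : Fin n → Fin m) (v : Fin n) : 0 ≤ indfh f h v := by
  unfold indfh; split <;> norm_num

lemma indfh_L3 {d n m : ℕ} (f h : Fin n → Fin m) (Y : (Fin d → Fin n) → ℝ) :
    ∑ j ∈ univ.filter (fun j : Fin d → Fin n => f ∘ j ≠ h ∘ j), |Y j|
      ≤ ∑ j : Fin d → Fin n, (∑ t : Fin d, indfh f h (j t)) * |Y j| := by
  refine le_trans (b := ∑ j ∈ univ.filter (fun j : Fin d → Fin n => f ∘ j ≠ h ∘ j),
      (∑ t : Fin d, indfh f h (j t)) * |Y j|) ?_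
    (Finset.sum_le_sum_of_subset_of_nonneg (Finset.subset_univ _)
    (fun j _ _ => mul_nonneg (Finset.sum_nonneg fun t _ => indfh_nonneg f h (j t)) (abs_nonneg _)))
  refine Finset.sum_le_sum fun j hj => ?_
  simp only [Finset.mem_filter, Finset.mem_univ, true_and] at hj
  have : ∃ t, f (j t) ≠ h (j t) := by
    by_contra hc; push_neg at hc
    exact hj (funext fun t => hc t)
  obtain ⟨t0, ht0⟩ := this
  have h1 : (1:ℝ) ≤ ∑ t : Fin d, indfh f h (j t) := by
    have := Finset.single_le_sum (f := fun t => indfh f h (j t))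
      (fun t _ => indfh_nonneg f h (j t)) (Finset.mem_univ t0)
    simpa [indfh, ht0] using this
  nlinarith [abs_nonneg (Y j)]

lemma perm_count {n : ℕ} (c : Fin n → ℝ) (v : Fin n) :
    (n : ℝ) * ∑ g : Equiv.Perm (Fin n), c (g⁻¹ v) = (Nat.factorial n : ℝ) * ∑ w, c w := by
  have hinv : ∑ g : Equiv.Perm (Fin n), c (g⁻¹ v) = ∑ g : Equiv.Perm (Fin n), c (g v) :=
    Fintype.sum_equiv (Equiv.inv (Equiv.Perm (Fin n))) _ _ (fun g => rfl)
  have hconst : ∀ v' : Fin n, ∑ g : Equiv.Perm (Fin n), c (g v')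
      = ∑ g : Equiv.Perm (Fin n), c (g v) := by
    intro v'
    refine Fintype.sum_equiv (Equiv.mulRight (Equiv.swap v' v)) _ _ (fun g => ?_)
    simp [Equiv.Perm.mul_apply]
  have h1 : ∑ v' : Fin n, ∑ g : Equiv.Perm (Fin n), c (g v')
      = (n : ℝ) * ∑ g : Equiv.Perm (Fin n), c (g v) := by
    rw [Finset.sum_congr rfl (fun v' _ => hconst v')]
    simp [Finset.card_univ, mul_comm]
  have h2 : ∑ v' : Fin n, ∑ g : Equiv.Perm (Fin n), c (g v')
      = (Nat.factorial n : ℝ) * ∑ w, c w := by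
    rw [Finset.sum_comm]
    rw [Finset.sum_congr rfl (fun g _ => Equiv.sum_comp g c)]
    simp [Finset.card_univ, Fintype.card_perm, mul_comm]
  rw [hinv, ← h1, h2]

theorem stmt7 (d n m : ℕ) (hd : 1 ≤ d) (hn : 1 ≤ n) (hm : 1 ≤ m)
    (f h : Fin n → Fin m) (X : (Fin d → Fin n) → ℝ) :
    (∑ a : Fin d → Fin m, |binOpD f X a| ≤ ∑ j : Fin d → Fin n, |X j|) ∧
    ((Nat.factorial n : ℝ)⁻¹ *
        ∑ g : Equiv.Perm (Fin n),
          ∑ a : Fin d → Fin m,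
            |binOpD f (fun j => X (⇑g ∘ j)) a - binOpD h (fun j => X (⇑g ∘ j)) a|
      ≤ 2 * (d : ℝ) *
          (((Finset.univ.filter (fun j : Fin n => f j ≠ h j)).card : ℝ) / (n : ℝ)) *
          ∑ j : Fin d → Fin n, |X j|) := by
  have hn0 : (n : ℝ) ≠ 0 := by positivity
  have hfac : (0 : ℝ) < (Nat.factorial n : ℝ) := by
    exact_mod_cast Nat.factorial_pos n
  set Bc : ℝ := ((Finset.univ.filter (fun j : Fin n => f j ≠ h j)).card : ℝ) with hBc
  refine ⟨binOpD_contraction f X, ?_⟩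
  have hsum : ∑ w, indfh f h w = Bc := by
    simp only [indfh]
    rw [Finset.sum_ite, Finset.sum_const_zero, Finset.sum_const, zero_add, nsmul_eq_mul,
      mul_one, hBc]
  have hv : ∀ v : Fin n, ∑ g : Equiv.Perm (Fin n), indfh f h (g⁻¹ v)
      = (Nat.factorial n : ℝ) * Bc / n := by
    intro v
    have hpc := perm_count (indfh f h) v
    rw [hsum] at hpc
    rw [eq_div_iff hn0]
    linear_combination hpc
  have per_g : ∀ g : Equiv.Perm (Fin n),
      ∑ a : Fin d → Fin m,
        |binOpD f (fun j => X (⇑g ∘ j)) a - binOpD h (fun j => X (⇑g ∘ j)) a|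
      ≤ 2 * ∑ k : Fin d → Fin n, (∑ t : Fin d, indfh f h (g⁻¹ (k t))) * |X k| := by
    intro g
    refine (binOpD_diff_bound f h _).trans ?_
    have h3 := indfh_L3 f h (fun j => X (⇑g ∘ j))
    refine (by linarith : _ ≤ 2 * ∑ j : Fin d → Fin n,
      (∑ t : Fin d, indfh f h (j t)) * |X (⇑g ∘ j)|).trans (le_of_eq ?_)
    congr 1
    refine Fintype.sum_equiv (Equiv.piCongrRight (fun _ : Fin d => g)) _ _ (fun j => ?_)
    have he : (Equiv.piCongrRight fun _ : Fin d => g) j = ⇑g ∘ j := rfl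
    simp [he, Function.comp]
  have total : ∑ g : Equiv.Perm (Fin n), ∑ a : Fin d → Fin m,
        |binOpD f (fun j => X (⇑g ∘ j)) a - binOpD h (fun j => X (⇑g ∘ j)) a|
      ≤ 2 * (d : ℝ) * ((Nat.factorial n : ℝ) * Bc / n) * ∑ j : Fin d → Fin n, |X j| := by
    calc ∑ g : Equiv.Perm (Fin n), ∑ a : Fin d → Fin m,
          |binOpD f (fun j => X (⇑g ∘ j)) a - binOpD h (fun j => X (⇑g ∘ j)) a|
        ≤ ∑ g : Equiv.Perm (Fin n),
            2 * ∑ k : Fin d → Fin n, (∑ t : Fin d, indfh f h (g⁻¹ (k t))) * |X k| :=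
          Finset.sum_le_sum fun g _ => per_g g
      _ = 2 * ∑ k : Fin d → Fin n,
            (∑ t : Fin d, ∑ g : Equiv.Perm (Fin n), indfh f h (g⁻¹ (k t))) * |X k| := by
          rw [← Finset.mul_sum]
          congr 1
          rw [Finset.sum_comm]
          refine Finset.sum_congr rfl fun k _ => ?_
          rw [← Finset.sum_mul, Finset.sum_comm]
      _ = 2 * ∑ k : Fin d → Fin n, ((d : ℝ) * ((Nat.factorial n : ℝ) * Bc / n)) * |X k| := by
          refine congrArg _ (Finset.sum_congr rfl fun k _ => ?_)
          rw [Finset.sum_congr rfl fun t _ => hv (k t)]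
          simp [Finset.card_univ, mul_comm]
      _ = 2 * (d : ℝ) * ((Nat.factorial n : ℝ) * Bc / n) * ∑ j : Fin d → Fin n, |X j| := by
          rw [← Finset.mul_sum]; ring
  calc (Nat.factorial n : ℝ)⁻¹ *
        ∑ g : Equiv.Perm (Fin n), ∑ a : Fin d → Fin m,
          |binOpD f (fun j => X (⇑g ∘ j)) a - binOpD h (fun j => X (⇑g ∘ j)) a|
      ≤ (Nat.factorial n : ℝ)⁻¹ *
          (2 * (d : ℝ) * ((Nat.factorial n : ℝ) * Bc / n) * ∑ j : Fin d → Fin n, |X j|) :=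
        mul_le_mul_of_nonneg_left total (by positivity)
    _ = 2 * (d : ℝ) * (Bc / n) * ∑ j : Fin d → Fin n, |X j| := by
        field_simp
end

section
/- Let E be a measurable space, let n ≥ 1, and let μ be any probability measure on (Fin n → E). For each integer m ≥ 1 define ν_m = n^(−m) · ∑_{f : Fin m → Fin n} (pushforward of μ under x ↦ x ∘ f). Then for all 1 ≤ m ≤ m', the pushforward of ν_{m'} under z ↦ z ∘ ι, where ι : Fin m → Fin m' is the canonical inclusion, equals ν_m. Moreover each ν_m is exchangeable, i.e. invariant under pushforward by z ↦ z ∘ σ for every permutation σ of Fin m. -/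
open MeasureTheory
open scoped ENNReal

/-- The law of `m` entries of a `μ`-random vector sampled with replacement:
`ν_m = n^{-m} • ∑_{f : Fin m → Fin n} (x ↦ x ∘ f)_* μ`. -/
noncomputable def sampledLaw {E : Type*} [MeasurableSpace E] (n : ℕ)
    (μ : Measure (Fin n → E)) (m : ℕ) : Measure (Fin m → E) :=
  ((n : ℝ≥0∞) ^ m)⁻¹ • ∑ f : Fin m → Fin n, μ.map (fun x => x ∘ f)

lemma measurable_comp_right {E : Type*} [MeasurableSpace E] {a b : ℕ} (f : Fin a → Fin b) :
    Measurable (fun x : Fin b → E => x ∘ f) :=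
  measurable_pi_lambda _ fun i => measurable_pi_apply (f i)

lemma measure_map_finset_sum {α β ι : Type*} [MeasurableSpace α] [MeasurableSpace β]
    (s : Finset ι) (μ : ι → Measure α) {f : α → β} (hf : Measurable f) :
    (∑ i ∈ s, μ i).map f = ∑ i ∈ s, (μ i).map f := by
  classical
  induction s using Finset.induction_on with
  | empty => simp
  | insert _ _ h ih => rw [Finset.sum_insert h, Finset.sum_insert h, Measure.map_add _ _ hf, ih]

theorem stmt9 {E : Type*} [MeasurableSpace E] (n : ℕ) (hn : 1 ≤ n)
    (μ : Measure (Fin n → E)) [IsProbabilityMeasure μ] :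
    (∀ (m m' : ℕ) (hm : 1 ≤ m) (hmm : m ≤ m'),
      (sampledLaw n μ m').map (fun z => z ∘ Fin.castLE hmm) = sampledLaw n μ m) ∧
    (∀ (m : ℕ) (σ : Equiv.Perm (Fin m)),
      (sampledLaw n μ m).map (fun z => z ∘ ⇑σ) = sampledLaw n μ m) := by
  have hn0 : (n : ℝ≥0∞) ≠ 0 := by exact_mod_cast Nat.one_le_iff_ne_zero.mp hn
  have hnt : (n : ℝ≥0∞) ≠ ∞ := ENNReal.natCast_ne_top n
  constructor
  · intro m m' hm hmm
    set k := m' - m with hk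
    have hmk : m + k = m' := by omega
    -- the equivalence (Fin m → Fin n) × (Fin k → Fin n) ≃ (Fin m' → Fin n)
    let e : (Fin m → Fin n) × (Fin k → Fin n) ≃ (Fin m' → Fin n) :=
      (Equiv.sumArrowEquivProdArrow (Fin m) (Fin k) (Fin n)).symm.trans
        ((finSumFinEquiv.symm.arrowCongr (Equiv.refl (Fin n))).symm.trans
          (((finCongr hmk).arrowCongr (Equiv.refl (Fin n)))))
    have he : ∀ p : (Fin m → Fin n) × (Fin k → Fin n),
        (e p) ∘ Fin.castLE hmm = p.1 := by
      intro p
      funext j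
      have h1 : Fin.cast hmk.symm (Fin.castLE hmm j) = Fin.castAdd k j := by
        ext; simp
      show Sum.elim p.1 p.2 (finSumFinEquiv.symm (Fin.cast hmk.symm (Fin.castLE hmm j))) = p.1 j
      rw [h1, finSumFinEquiv_symm_apply_castAdd, Sum.elim_inl]
    rw [sampledLaw, Measure.map_smul,
      measure_map_finset_sum _ _ (measurable_comp_right (Fin.castLE hmm))]
    have hmap : ∀ f : Fin m' → Fin n,
        (μ.map (fun x => x ∘ f)).map (fun z => z ∘ Fin.castLE hmm)
          = μ.map (fun x => x ∘ (f ∘ Fin.castLE hmm)) := by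
      intro f
      rw [Measure.map_map (measurable_comp_right _) (measurable_comp_right _)]
      rfl
    calc ((n : ℝ≥0∞) ^ m')⁻¹ •
          ∑ f : Fin m' → Fin n, (μ.map (fun x => x ∘ f)).map (fun z => z ∘ Fin.castLE hmm)
        = ((n : ℝ≥0∞) ^ m')⁻¹ •
          ∑ f : Fin m' → Fin n, μ.map (fun x => x ∘ (f ∘ Fin.castLE hmm)) := by
          simp_rw [hmap]
      _ = ((n : ℝ≥0∞) ^ m')⁻¹ •
          ∑ p : (Fin m → Fin n) × (Fin k → Fin n), μ.map (fun x => x ∘ p.1) := by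
          congr 1
          rw [← Equiv.sum_comp e fun f => μ.map (fun x => x ∘ (f ∘ Fin.castLE hmm))]
          refine Finset.sum_congr rfl fun p _ => ?_
          rw [he p]
      _ = ((n : ℝ≥0∞) ^ m')⁻¹ •
          ((n:ℝ≥0∞) ^ k • ∑ g : Fin m → Fin n, μ.map (fun x => x ∘ g)) := by
          rw [Fintype.sum_prod_type]
          simp only [Finset.sum_const, Finset.card_univ, Fintype.card_fun,
            Fintype.card_fin]
          rw [← Finset.smul_sum]
          congr 1
          rw [← Nat.cast_smul_eq_nsmul ℝ≥0∞]
          simp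
      _ = sampledLaw n μ m := by
          rw [sampledLaw, smul_smul, ← hmk, pow_add,
            ENNReal.mul_inv (Or.inl (pow_ne_zero _ hn0)) (Or.inl (ENNReal.pow_ne_top hnt))]
          congr 1
          rw [mul_assoc,
            ENNReal.inv_mul_cancel (pow_ne_zero _ hn0) (ENNReal.pow_ne_top hnt), mul_one]
  · intro m σ
    rw [sampledLaw, Measure.map_smul, measure_map_finset_sum _ _ (measurable_comp_right σ)]
    congr 1
    have hmap : ∀ f : Fin m → Fin n,
        (μ.map (fun x => x ∘ f)).map (fun z => z ∘ ⇑σ) = μ.map (fun x => x ∘ (f ∘ ⇑σ)) := by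
      intro f
      rw [Measure.map_map (measurable_comp_right _) (measurable_comp_right _)]
      rfl
    simp_rw [hmap]
    exact Fintype.sum_equiv (σ.arrowCongr (Equiv.refl (Fin n))).symm _ _
      (fun f => by simp [Equiv.arrowCongr, Function.comp])
end

section
/- Let E be a type, let 1 ≤ k ≤ n and N ≥ 1 be integers, let q : (Fin k → E) → ℝ, and let y : Fin N → E. Then there exists a map f : Fin n → Fin N such that sym_n q (y ∘ f) ≤ N^(−k) · ∑_{h : Fin k → Fin N} q(y ∘ h). -/
open Finset Function

/-- The symmetrization `sym_n q (x) = ((n−k)!/n!) ∑_{φ : Fin k ↪ Fin n} q (x ∘ φ)`. -/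
noncomputable def symN {E : Type*} (k n : ℕ) (q : (Fin k → E) → ℝ) (x : Fin n → E) : ℝ :=
  (Nat.factorial (n - k) : ℝ) / (Nat.factorial n : ℝ) *
    ∑ φ ∈ Finset.univ.filter (fun φ : Fin k → Fin n => Function.Injective φ), q (x ∘ φ)

/-- Summing `g (f ∘ φ)` over all `f : Fin n → Fin N` for an injective `φ`
gives `N^(n-k)` times the full sum. -/
lemma sum_comp_inj {k n N : ℕ} (g : (Fin k → Fin N) → ℝ)
    (φ : Fin k → Fin n) (hφ : Function.Injective φ) :
    ∑ f : Fin n → Fin N, g (f ∘ φ) = (N : ℝ) ^ (n - k) * ∑ h : Fin k → Fin N, g h := by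
  classical
  have hcard : Fintype.card ↥(Set.range φ)ᶜ = n - k := by
    rw [Fintype.card_compl_set]
    simp [Set.card_range_of_injective hφ]
  let e1 : Fin k ≃ Set.range φ := Equiv.ofInjective φ hφ
  let e2 : ↥(Set.range φ)ᶜ ≃ Fin (n - k) := Fintype.equivFinOfCardEq hcard
  let E : Fin n ≃ Fin k ⊕ Fin (n - k) :=
    (Equiv.Set.sumCompl (Set.range φ)).symm.trans (Equiv.sumCongr e1.symm e2)
  let Ψ : (Fin n → Fin N) ≃ (Fin k → Fin N) × (Fin (n - k) → Fin N) :=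
    (Equiv.arrowCongr E (Equiv.refl _)).trans (Equiv.sumArrowEquivProdArrow _ _ _)
  have key : ∀ p : (Fin k → Fin N) × (Fin (n - k) → Fin N), (Ψ.symm p) ∘ φ = p.1 := by
    intro p
    funext i
    have hmem : φ i ∈ Set.range φ := ⟨i, rfl⟩
    show (Ψ.symm p) (φ i) = p.1 i
    have hE : E (φ i) = Sum.inl i := by
      have h1 : (Equiv.Set.sumCompl (Set.range φ)).symm (φ i) = Sum.inl ⟨φ i, hmem⟩ :=
        Equiv.Set.sumCompl_symm_apply_of_mem hmem
      have h2 : (⟨φ i, hmem⟩ : Set.range φ) = e1 i := rfl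
      simp only [E, Equiv.trans_apply, h1, Equiv.sumCongr_apply, Sum.map_inl, h2,
        Equiv.symm_apply_apply]
    simp [Ψ, Equiv.sumArrowEquivProdArrow, Equiv.arrowCongr, hE]
  calc ∑ f : Fin n → Fin N, g (f ∘ φ)
      = ∑ p : (Fin k → Fin N) × (Fin (n - k) → Fin N), g ((Ψ.symm p) ∘ φ) :=
        (Equiv.sum_comp Ψ.symm _).symm
    _ = ∑ p : (Fin k → Fin N) × (Fin (n - k) → Fin N), g p.1 := by
        simp only [key]
    _ = ∑ a : Fin k → Fin N, ∑ _b : Fin (n - k) → Fin N, g a := Fintype.sum_prod_type _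
    _ = (N : ℝ) ^ (n - k) * ∑ h : Fin k → Fin N, g h := by
        simp [Finset.sum_const, Fintype.card_fun, Finset.mul_sum, mul_comm]

theorem stmt10 {E : Type*} (k n N : ℕ) (hk : 1 ≤ k) (hkn : k ≤ n) (hN : 1 ≤ N)
    (q : (Fin k → E) → ℝ) (y : Fin N → E) :
    ∃ f : Fin n → Fin N,
      symN k n q (y ∘ f) ≤ ((N : ℝ) ^ k)⁻¹ * ∑ h : Fin k → Fin N, q (y ∘ h) := by
  classical
  haveI : NeZero N := ⟨by omega⟩
  have hNne : (N : ℝ) ≠ 0 := Nat.cast_ne_zero.mpr (by omega)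
  set S := ∑ h : Fin k → Fin N, q (y ∘ h) with hS
  have hcardinj : ((Finset.univ.filter
      (fun φ : Fin k → Fin n => Function.Injective φ)).card : ℝ) = n.descFactorial k := by
    norm_cast
    rw [← Fintype.card_subtype]
    rw [Fintype.card_congr (Equiv.subtypeInjectiveEquivEmbedding (Fin k) (Fin n))]
    simp [Fintype.card_embedding_eq]
  have hfac : ((n - k).factorial : ℝ) * (n.descFactorial k : ℝ) = (n.factorial : ℝ) := by
    exact_mod_cast congrArg (Nat.cast : ℕ → ℝ) (Nat.factorial_mul_descFactorial hkn)
  have hsum : ∑ f : Fin n → Fin N, symN k n q (y ∘ f)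
      = ∑ _f : Fin n → Fin N, ((N : ℝ) ^ k)⁻¹ * S := by
    unfold symN
    rw [← Finset.mul_sum, Finset.sum_comm]
    have hinner : ∀ φ ∈ Finset.univ.filter (fun φ : Fin k → Fin n => Function.Injective φ),
        ∑ f : Fin n → Fin N, q ((y ∘ f) ∘ φ)
          = (N : ℝ) ^ (n - k) * S := by
      intro φ hφ
      simp only [Finset.mem_filter] at hφ
      have := sum_comp_inj (fun h : Fin k → Fin N => q (y ∘ h)) φ hφ.2
      simpa [Function.comp_assoc] using this
    rw [Finset.sum_congr rfl hinner, Finset.sum_const, nsmul_eq_mul, hcardinj]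
    rw [Finset.sum_const, Finset.card_univ, Fintype.card_fun, nsmul_eq_mul]
    have hpow : (N : ℝ) ^ (n - k) = (N : ℝ) ^ n * ((N : ℝ) ^ k)⁻¹ := by
      exact pow_sub₀ _ hNne hkn
    rw [hpow]
    have hnfac : (n.factorial : ℝ) ≠ 0 := by positivity
    have h1 : ((n - k).factorial : ℝ) / (n.factorial : ℝ) * (n.descFactorial k : ℝ) = 1 := by
      rw [div_mul_eq_mul_div, hfac, div_self hnfac]
    push_cast
    rw [Fintype.card_fin, Fintype.card_fin]
    calc ((n - k).factorial : ℝ) / ↑n.factorial * (↑(n.descFactorial k) * ((N:ℝ) ^ n * ((N:ℝ) ^ k)⁻¹ * S))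
        = ((n - k).factorial : ℝ) / ↑n.factorial * ↑(n.descFactorial k) * ((N:ℝ) ^ n * ((N:ℝ) ^ k)⁻¹ * S) := by ring
      _ = (N:ℝ) ^ n * ((N:ℝ) ^ k)⁻¹ * S := by rw [h1, one_mul]
      _ = (N:ℝ) ^ n * (((N:ℝ) ^ k)⁻¹ * S) := by ring
  haveI : Nonempty (Fin N) := ⟨⟨0, by omega⟩⟩
  obtain ⟨f, _, hf⟩ := Finset.exists_le_of_sum_le (Finset.univ_nonempty
    (α := Fin n → Fin N)) hsum.le
  exact ⟨f, hf⟩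
end

section
/- Let E be a type, let 1 ≤ k ≤ n be integers, let q : (Fin k → E) → ℝ, and let x : Fin (n+1) → E. Then there exists an injective map g : Fin n → Fin (n+1) such that sym_n q (x ∘ g) ≤ sym_{n+1} q (x). Consequently, for any set Θ ⊆ E, the optimal values ℓ_n = inf_{x : Fin n → Θ} sym_n q(x) are nondecreasing in n for n ≥ k. -/
open Finset

lemma fiber_card (k n : ℕ) (hkn : k ≤ n) (φ : Fin k → Fin (n + 1))
    (hφ : Function.Injective φ) :
    (((univ : Finset (Fin (n+1))) ×ˢ
        (univ.filter (fun ψ : Fin k → Fin n => Function.Injective ψ))).filter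
      (fun p => p.1.succAbove ∘ p.2 = φ)).card = n + 1 - k := by
  have hcard : (univ.filter (fun m : Fin (n+1) => ∀ i, φ i ≠ m)).card = n + 1 - k := by
    classical
    have : univ.filter (fun m : Fin (n+1) => ∀ i, φ i ≠ m)
        = univ \ (univ.image φ) := by
      ext m
      simp [eq_comm]
    rw [this, card_sdiff_of_subset (subset_univ _), card_image_of_injective _ hφ]
    simp
  rw [← hcard]
  apply Finset.card_bij (fun p _ => p.1)
  · rintro ⟨m, ψ⟩ hp
    simp only [mem_filter, mem_product, mem_univ, true_and] at hp ⊢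
    intro i hi
    have := congrFun hp.2 i
    simp only [Function.comp_apply] at this
    rw [hi] at this
    exact Fin.succAbove_ne m (ψ i) this
  · rintro ⟨m₁, ψ₁⟩ h₁ ⟨m₂, ψ₂⟩ h₂ h
    simp only [mem_filter, mem_product, mem_univ, true_and] at h₁ h₂
    simp only at h
    subst h
    have : ψ₁ = ψ₂ := by
      funext i
      have e1 := congrFun h₁.2 i
      have e2 := congrFun h₂.2 i
      simp only [Function.comp_apply] at e1 e2
      exact Fin.succAbove_right_injective (e1.trans e2.symm)
    rw [this]
  · intro m hm
    simp only [mem_filter, mem_univ, true_and] at hm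
    have hψ : ∀ i, ∃ z, m.succAbove z = φ i := fun i =>
      Fin.exists_succAbove_eq (hm i)
    choose ψ hψ using hψ
    have hψinj : Function.Injective ψ := by
      intro a b hab
      apply hφ
      rw [← hψ a, ← hψ b, hab]
    refine ⟨⟨m, ψ⟩, ?_, rfl⟩
    simp only [mem_filter, mem_product, mem_univ, true_and]
    exact ⟨hψinj, funext hψ⟩

lemma symN_avg {E : Type*} (k n : ℕ) (hkn : k ≤ n)
    (q : (Fin k → E) → ℝ) (x : Fin (n + 1) → E) :
    ∑ m : Fin (n + 1), symN k n q (x ∘ m.succAbove) = (n + 1) * symN k (n + 1) q x := by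
  classical
  have key : ∑ p ∈ ((univ : Finset (Fin (n+1))) ×ˢ
        (univ.filter (fun ψ : Fin k → Fin n => Function.Injective ψ))),
        q (x ∘ (p.1.succAbove ∘ p.2))
      = (n + 1 - k : ℕ) *
        ∑ φ ∈ univ.filter (fun φ : Fin k → Fin (n+1) => Function.Injective φ),
          q (x ∘ φ) := by
    rw [← Finset.sum_fiberwise_of_maps_to (g := fun p : Fin (n+1) × (Fin k → Fin n) =>
        p.1.succAbove ∘ p.2)
        (t := univ.filter (fun φ : Fin k → Fin (n+1) => Function.Injective φ))
        (fun p hp => by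
          simp only [mem_filter, mem_product, mem_univ, true_and] at hp ⊢
          exact Fin.succAbove_right_injective.comp hp)]
    rw [Finset.mul_sum]
    refine Finset.sum_congr rfl fun φ hφ => ?_
    simp only [mem_filter, mem_univ, true_and] at hφ
    have : ∀ p ∈ (((univ : Finset (Fin (n+1))) ×ˢ
        (univ.filter (fun ψ : Fin k → Fin n => Function.Injective ψ))).filter
          (fun p => p.1.succAbove ∘ p.2 = φ)),
        q (x ∘ (p.1.succAbove ∘ p.2)) = q (x ∘ φ) := by
      intro p hp
      simp only [mem_filter] at hp
      rw [hp.2]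
    rw [Finset.sum_congr rfl this, Finset.sum_const, fiber_card k n hkn φ hφ,
      nsmul_eq_mul]
  have lhs : ∑ m : Fin (n + 1), symN k n q (x ∘ m.succAbove)
      = (Nat.factorial (n - k) : ℝ) / (Nat.factorial n : ℝ) *
        ∑ p ∈ ((univ : Finset (Fin (n+1))) ×ˢ
          (univ.filter (fun ψ : Fin k → Fin n => Function.Injective ψ))),
          q (x ∘ (p.1.succAbove ∘ p.2)) := by
    rw [Finset.sum_product]
    simp only [symN, Finset.mul_sum]
    congr 1
  rw [lhs, key, symN]
  have h1 : (n + 1 - k : ℕ) = (n - k) + 1 := by omega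
  have h2 : Nat.factorial (n + 1 - k) = (n + 1 - k) * Nat.factorial (n - k) := by
    rw [h1, Nat.factorial_succ, ← h1]
  rw [h2, Nat.factorial_succ]
  push_cast
  have hn : (Nat.factorial n : ℝ) ≠ 0 := by positivity
  have hnk : ((n : ℝ) + 1 - k) ≠ 0 := by
    have : (k : ℝ) ≤ n := by exact_mod_cast hkn
    linarith
  have hne : ((n : ℝ) + 1) ≠ 0 := by positivity
  field_simp

theorem stmt11 {E : Type*} (k n : ℕ) (hk : 1 ≤ k) (hkn : k ≤ n)
    (q : (Fin k → E) → ℝ) (x : Fin (n + 1) → E) :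
    (∃ g : Fin n → Fin (n + 1), Function.Injective g ∧
        symN k n q (x ∘ g) ≤ symN k (n + 1) q x) ∧
    (∀ Θ : Set E,
      sInf {r : EReal | ∃ y : Fin n → E, (∀ i, y i ∈ Θ) ∧ r = (symN k n q y : EReal)} ≤
      sInf {r : EReal |
        ∃ y : Fin (n + 1) → E, (∀ i, y i ∈ Θ) ∧ r = (symN k (n + 1) q y : EReal)}) := by
  have hstep : ∀ z : Fin (n + 1) → E, ∃ g : Fin n → Fin (n + 1), Function.Injective g ∧
      symN k n q (z ∘ g) ≤ symN k (n + 1) q z := by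
    intro z
    have havg := symN_avg k n hkn q z
    have hex : ∃ m ∈ (univ : Finset (Fin (n + 1))),
        symN k n q (z ∘ m.succAbove) ≤ symN k (n + 1) q z := by
      apply Finset.exists_le_of_sum_le univ_nonempty
      rw [havg, Finset.sum_const, Finset.card_univ, Fintype.card_fin, nsmul_eq_mul]
      push_cast
      exact le_rfl
    obtain ⟨m, -, hm⟩ := hex
    exact ⟨m.succAbove, Fin.succAbove_right_injective, hm⟩
  refine ⟨hstep x, ?_⟩
  intro Θ
  apply le_sInf
  rintro r ⟨y, hy, rfl⟩
  obtain ⟨g, hg, hle⟩ := hstep y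
  calc sInf {r : EReal | ∃ y : Fin n → E, (∀ i, y i ∈ Θ) ∧ r = (symN k n q y : EReal)}
      ≤ (symN k n q (y ∘ g) : EReal) := sInf_le ⟨y ∘ g, fun i => hy (g i), rfl⟩
    _ ≤ (symN k (n + 1) q y : EReal) := EReal.coe_le_coe_iff.mpr hle
end

section
/- Let E be a type, let 1 ≤ k ≤ n be integers, let x : Fin n → E, and let q : (Fin k → E) → ℝ. Then | n^(−k) · ∑_{f : Fin k → Fin n} q(x ∘ f) − sym_n q(x) | ≤ (k(k−1)/n) · max_{f : Fin k → Fin n} |q(x ∘ f)|. -/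
-- key combinatorial inequality, real form
lemma desc_ineq (n : ℕ) : ∀ k : ℕ, 2 * ((n:ℝ)^(k+1) - (n.descFactorial (k+1) : ℝ)) ≤ k*(k+1)*(n:ℝ)^k := by
  intro k
  induction k with
  | zero => simp [Nat.descFactorial]
  | succ k ih =>
    have hD : (n.descFactorial (k+1) : ℝ) ≤ (n:ℝ)^(k+1) := by
      exact_mod_cast Nat.descFactorial_le_pow n (k+1)
    have hD0 : (0:ℝ) ≤ (n.descFactorial (k+1) : ℝ) := by positivity
    have hcast : ((n - (k+1) : ℕ) : ℝ) ≥ (n:ℝ) - (k+1) := by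
      rcases le_total n (k+1) with h | h
      · have : ((n - (k+1) : ℕ) : ℝ) = 0 := by
          rw [Nat.sub_eq_zero_of_le h]; simp
        rw [this]
        have : (n:ℝ) ≤ (k+1:ℕ) := by exact_mod_cast h
        push_cast at this ⊢; linarith
      · rw [Nat.cast_sub h]; push_cast; linarith
    have hsucc : (n.descFactorial (k+2) : ℝ) = ((n - (k+1) : ℕ) : ℝ) * (n.descFactorial (k+1) : ℝ) := by
      rw [Nat.descFactorial_succ]; push_cast; ring
    have hn0 : (0:ℝ) ≤ (n:ℝ) := by positivity
    have hge : (n.descFactorial (k+2) : ℝ) ≥ ((n:ℝ) - (k+1)) * (n.descFactorial (k+1) : ℝ) := by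
      rw [hsucc]
      exact mul_le_mul_of_nonneg_right hcast hD0
    have hpow : (n:ℝ)^(k+2) = (n:ℝ) * (n:ℝ)^(k+1) := by ring
    push_cast
    show 2 * ((n:ℝ)^(k+2) - (n.descFactorial (k+2) : ℝ)) ≤ (((k:ℕ):ℝ)+1)*((((k:ℕ):ℝ)+1)+1)*(n:ℝ)^(k+1)
    have hk0 : (0:ℝ) ≤ (k:ℝ)+1 := by positivity
    have h1 : (n:ℝ) * (2 * ((n:ℝ)^(k+1) - (n.descFactorial (k+1) : ℝ))) ≤ (k:ℝ)*((k:ℝ)+1)*(n:ℝ)^(k+1) := by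
      calc (n:ℝ) * (2 * ((n:ℝ)^(k+1) - (n.descFactorial (k+1) : ℝ)))
          ≤ (n:ℝ) * ((k:ℝ)*((k:ℝ)+1)*(n:ℝ)^k) := mul_le_mul_of_nonneg_left ih hn0
        _ = (k:ℝ)*((k:ℝ)+1)*(n:ℝ)^(k+1) := by ring
    have h2 : ((k:ℝ)+1) * (n.descFactorial (k+1) : ℝ) ≤ ((k:ℝ)+1) * (n:ℝ)^(k+1) :=
      mul_le_mul_of_nonneg_left hD hk0
    nlinarith [h1, h2, hge, hpow]

theorem stmt12 {E : Type*} (k n : ℕ) (hk : 1 ≤ k) (hkn : k ≤ n)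
    (x : Fin n → E) (q : (Fin k → E) → ℝ) :
    |((n : ℝ) ^ k)⁻¹ * (∑ f : Fin k → Fin n, q (x ∘ f)) - symN k n q x|
      ≤ (k : ℝ) * ((k : ℝ) - 1) / (n : ℝ) *
          Finset.univ.sup' (Finset.univ_nonempty_iff.mpr ⟨fun _ => ⟨0, by omega⟩⟩)
            (fun f : Fin k → Fin n => |q (x ∘ f)|) := by
  classical
  have hn1 : 1 ≤ n := le_trans hk hkn
  set M := Finset.univ.sup' (Finset.univ_nonempty_iff.mpr ⟨fun _ => ⟨0, by omega⟩⟩)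
      (fun f : Fin k → Fin n => |q (x ∘ f)|) with hMdef
  have hMle : ∀ f : Fin k → Fin n, |q (x ∘ f)| ≤ M := by
    intro f
    rw [hMdef]
    exact Finset.le_sup' (fun f : Fin k → Fin n => |q (x ∘ f)|) (Finset.mem_univ f)
  have hM0 : 0 ≤ M := le_trans (abs_nonneg _) (hMle (fun _ => ⟨0, by omega⟩))
  set S := Finset.univ.filter (fun f : Fin k → Fin n => Function.Injective f) with hSdef
  -- cardinalities
  have hcardS : S.card = n.descFactorial k := by
    rw [hSdef, ← Fintype.card_subtype]
    rw [Fintype.card_congr (Equiv.subtypeInjectiveEquivEmbedding (Fin k) (Fin n))]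
    rw [Fintype.card_embedding_eq]
    simp
  have hcardU : Fintype.card (Fin k → Fin n) = n ^ k := by simp
  have hDle : n.descFactorial k ≤ n ^ k := Nat.descFactorial_le_pow n k
  have hcardC : Sᶜ.card = n ^ k - n.descFactorial k := by
    rw [Finset.card_compl, hcardS, hcardU]
  have hDpos : 0 < n.descFactorial k := by
    rcases Nat.eq_zero_or_pos (n.descFactorial k) with h | h
    · exact absurd (Nat.descFactorial_eq_zero_iff_lt.mp h) (by omega)
    · exact h
  -- real abbreviations
  set D : ℝ := (n.descFactorial k : ℝ) with hDdef
  set N : ℝ := (n : ℝ) ^ k with hNdef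
  have hnR : (1:ℝ) ≤ (n:ℝ) := by exact_mod_cast hn1
  have hNpos : 0 < N := by rw [hNdef]; positivity
  have hDposR : 0 < D := by rw [hDdef]; exact_mod_cast hDpos
  have hDN : D ≤ N := by rw [hDdef, hNdef]; exact_mod_cast hDle
  have hfac : ((n - k).factorial : ℝ) * D = (n.factorial : ℝ) := by
    rw [hDdef]; exact_mod_cast Nat.factorial_mul_descFactorial hkn
  have hfacpos : (0:ℝ) < (n.factorial : ℝ) := by exact_mod_cast n.factorial_pos
  have hc : ((n - k).factorial : ℝ) / (n.factorial : ℝ) = D⁻¹ := by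
    rw [inv_eq_one_div, div_eq_div_iff hfacpos.ne' hDposR.ne']
    linarith [hfac]
  -- sums
  set s1 := ∑ f ∈ S, q (x ∘ f) with hs1
  set s2 := ∑ f ∈ Sᶜ, q (x ∘ f) with hs2
  have hsplit : (∑ f : Fin k → Fin n, q (x ∘ f)) = s1 + s2 :=
    (Finset.sum_add_sum_compl S _).symm
  have habs1 : |s1| ≤ D * M := by
    calc |s1| ≤ ∑ f ∈ S, |q (x ∘ f)| := Finset.abs_sum_le_sum_abs _ _
      _ ≤ S.card • M := Finset.sum_le_card_nsmul _ _ _ (fun f _ => hMle f)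
      _ = D * M := by rw [nsmul_eq_mul, hcardS, hDdef]
  have habs2 : |s2| ≤ (N - D) * M := by
    calc |s2| ≤ ∑ f ∈ Sᶜ, |q (x ∘ f)| := Finset.abs_sum_le_sum_abs _ _
      _ ≤ Sᶜ.card • M := Finset.sum_le_card_nsmul _ _ _ (fun f _ => hMle f)
      _ = (N - D) * M := by
          rw [nsmul_eq_mul, hcardC, Nat.cast_sub hDle, hDdef, hNdef]
          push_cast; ring
  -- key inequality
  have hkey : 2 * (N - D) ≤ ((k:ℝ) - 1) * (k:ℝ) * (n:ℝ) ^ (k - 1) := by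
    obtain ⟨m, rfl⟩ := Nat.exists_eq_add_of_le hk
    have h := desc_ineq n m
    have e1 : 1 + m = m + 1 := by omega
    rw [hNdef, hDdef, e1]
    simp only [Nat.add_sub_cancel]
    push_cast
    nlinarith [h]
  -- assemble
  rw [symN, hc, hsplit]
  have hstep1 : |N⁻¹ * (s1 + s2) - D⁻¹ * s1| ≤ N⁻¹ * |s2| + (D⁻¹ - N⁻¹) * |s1| := by
    have h1 : N⁻¹ * (s1 + s2) - D⁻¹ * s1 = N⁻¹ * s2 + (N⁻¹ - D⁻¹) * s1 := by ring
    rw [h1]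
    calc |N⁻¹ * s2 + (N⁻¹ - D⁻¹) * s1| ≤ |N⁻¹ * s2| + |(N⁻¹ - D⁻¹) * s1| := abs_add_le _ _
      _ = N⁻¹ * |s2| + (D⁻¹ - N⁻¹) * |s1| := by
          rw [abs_mul, abs_mul, abs_of_nonneg (by positivity : (0:ℝ) ≤ N⁻¹)]
          congr 1
          rw [abs_of_nonpos]
          · ring
          · have : N⁻¹ ≤ D⁻¹ := by
              apply inv_anti₀ hDposR hDN
            linarith
  have hstep2 : N⁻¹ * |s2| + (D⁻¹ - N⁻¹) * |s1| ≤ 2 * (1 - D / N) * M := by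
    have hiv : N⁻¹ ≤ D⁻¹ := inv_anti₀ hDposR hDN
    have t1 : N⁻¹ * |s2| ≤ N⁻¹ * ((N - D) * M) :=
      mul_le_mul_of_nonneg_left habs2 (by positivity)
    have t2 : (D⁻¹ - N⁻¹) * |s1| ≤ (D⁻¹ - N⁻¹) * (D * M) :=
      mul_le_mul_of_nonneg_left habs1 (by linarith)
    have heq : N⁻¹ * ((N - D) * M) + (D⁻¹ - N⁻¹) * (D * M) = 2 * (1 - D / N) * M := by
      field_simp
      ring
    linarith
  have hstep3 : 2 * (1 - D / N) * M ≤ (k:ℝ) * ((k:ℝ) - 1) / (n:ℝ) * M := by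
    apply mul_le_mul_of_nonneg_right _ hM0
    have hnpos : (0:ℝ) < (n:ℝ) := by linarith
    have hpow : (n:ℝ)^(k-1) * (n:ℝ) = N := by
      rw [hNdef, ← pow_succ]
      congr 1
      omega
    have h2 : 2*(1 - D/N) = 2*(N - D)/N := by field_simp
    rw [h2, div_le_div_iff₀ hNpos hnpos]
    calc 2*(N-D)*(n:ℝ) ≤ ((k:ℝ)-1)*(k:ℝ)*(n:ℝ)^(k-1)*(n:ℝ) :=
          mul_le_mul_of_nonneg_right hkey hnpos.le
      _ = (k:ℝ)*((k:ℝ)-1)*N := by rw [← hpow]; ring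
  calc |N⁻¹ * (s1 + s2) - D⁻¹ * s1| ≤ N⁻¹ * |s2| + (D⁻¹ - N⁻¹) * |s1| := hstep1
    _ ≤ 2 * (1 - D / N) * M := hstep2
    _ ≤ _ := hstep3
end

section
/- Let d, m ≥ 1, let f be a real polynomial in m variables, and let α₁, …, α_m ∈ ℕ^d be multi-indices. Then there exist K ∈ ℕ and a real polynomial q in K·d variables (an element of MvPolynomial (Fin K × Fin d) ℝ) such that for every n ≥ 1 and every x : Fin n → (Fin d → ℝ), f( (1/n)·∑_{i ∈ Fin n} x_i^{α₁}, …, (1/n)·∑_{i ∈ Fin n} x_i^{α_m} ) = n^(−K) · ∑_{h : Fin K → Fin n} q̂(x ∘ h), where x_i^{α} denotes ∏_{t ∈ Fin d} (x_i(t))^{α(t)} and q̂(z) denotes the evaluation of q at the point z : Fin K → (Fin d → ℝ). Moreover one may take K equal to the total degree of f. -/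
open Finset

lemma countAdd (n a b : ℕ) (g : (Fin a → Fin n) → ℝ) :
    ∑ h : Fin (a + b) → Fin n, g (fun k => h (Fin.castAdd b k))
      = (n : ℝ) ^ b * ∑ h : Fin a → Fin n, g h := by
  rw [← Equiv.sum_comp
    ((Equiv.sumArrowEquivProdArrow (Fin a) (Fin b) (Fin n)).symm.trans
      (Equiv.arrowCongr finSumFinEquiv (Equiv.refl (Fin n))))
    (fun h : Fin (a+b) → Fin n => g (fun k => h (Fin.castAdd b k)))]
  rw [Fintype.sum_prod_type]
  simp only [Equiv.trans_apply, Equiv.sumArrowEquivProdArrow,Equiv.coe_fn_symm_mk,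
    Equiv.arrowCongr_apply, Function.comp, Equiv.refl_apply,
    finSumFinEquiv_symm_apply_castAdd, Sum.elim_inl]
  rw [Finset.sum_comm]
  simp [Finset.sum_const, mul_comm]

lemma countLE (n K a : ℕ) (hak : a ≤ K) (g : (Fin a → Fin n) → ℝ) :
    ∑ h : Fin K → Fin n, g (fun k => h (Fin.castLE hak k))
      = (n : ℝ) ^ (K - a) * ∑ h : Fin a → Fin n, g h := by
  have hK : a + (K - a) = K := Nat.add_sub_cancel' hak
  rw [← Equiv.sum_comp (Equiv.arrowCongr (finCongr hK) (Equiv.refl (Fin n)))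
    (fun h : Fin K → Fin n => g (fun k => h (Fin.castLE hak k)))]
  rw [← countAdd n a (K - a) g]
  apply Finset.sum_congr rfl
  intro h _
  congr 1

lemma existsSigma (m : ℕ) (u : Fin m → ℕ) :
    ∃ σ : Fin (∑ i, u i) → Fin m, ∀ S : Fin m → ℝ,
      ∏ k, S (σ k) = ∏ i, S i ^ u i := by
  have hcard : Fintype.card (Σ i : Fin m, Fin (u i)) = ∑ i, u i := by
    simp [Fintype.card_sigma]
  let e : (Σ i : Fin m, Fin (u i)) ≃ Fin (∑ i, u i) :=
    Fintype.equivFinOfCardEq hcard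
  refine ⟨fun k => (e.symm k).1, fun S => ?_⟩
  rw [show (∏ k, S ((fun k => (e.symm k).1) k)) = ∏ p : Σ i : Fin m, Fin (u i), S p.1 from Equiv.prod_comp e.symm (fun p => S p.1)]
  rw [← Finset.univ_sigma_univ, Finset.prod_sigma]
  simp

theorem stmt14 (d m : ℕ) (hd : 1 ≤ d) (hm : 1 ≤ m)
    (f : MvPolynomial (Fin m) ℝ) (α : Fin m → Fin d → ℕ) :
    ∃ (K : ℕ) (q : MvPolynomial (Fin K × Fin d) ℝ),
      K = f.totalDegree ∧
      ∀ (n : ℕ), 1 ≤ n → ∀ x : Fin n → Fin d → ℝ,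
        MvPolynomial.eval
            (fun i : Fin m => ((n : ℝ))⁻¹ * ∑ j : Fin n, ∏ t : Fin d, (x j t) ^ (α i t)) f
          = ((n : ℝ) ^ K)⁻¹ * ∑ h : Fin K → Fin n,
              MvPolynomial.eval (fun p : Fin K × Fin d => x (h p.1) p.2) q := by
  classical
  set K := f.totalDegree with hK
  have hdeg : ∀ u ∈ f.support, (∑ i, u i) ≤ K := by
    intro u hu
    have h1 := MvPolynomial.le_totalDegree hu
    rwa [Finsupp.sum_fintype _ _ (fun _ => rfl)] at h1
  choose σ hσ using fun u : Fin m →₀ ℕ => existsSigma m (fun i => u i)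
  refine ⟨K, ∑ u ∈ f.support.attach, MvPolynomial.C (f.coeff u.1) *
      ∏ k : Fin (∑ i, (u.1 : Fin m →₀ ℕ) i), ∏ t : Fin d,
        MvPolynomial.X (R := ℝ) (Fin.castLE (hdeg u.1 u.2) k, t) ^ α (σ u.1 k) t,
    rfl, ?_⟩
  intro n hn x
  have hn0 : (n : ℝ) ≠ 0 := Nat.cast_ne_zero.mpr (by omega)
  -- compute the RHS
  have hRHS : ∑ h : Fin K → Fin n,
      MvPolynomial.eval (fun p : Fin K × Fin d => x (h p.1) p.2)
        (∑ u ∈ f.support.attach, MvPolynomial.C (f.coeff u.1) *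
          ∏ k : Fin (∑ i, (u.1 : Fin m →₀ ℕ) i), ∏ t : Fin d,
            MvPolynomial.X (R := ℝ) (Fin.castLE (hdeg u.1 u.2) k, t) ^ α (σ u.1 k) t)
      = ∑ u ∈ f.support.attach, f.coeff u.1 *
          ((n : ℝ) ^ (K - ∑ i, (u.1 : Fin m →₀ ℕ) i) *
            ∏ i, (∑ j : Fin n, ∏ t : Fin d, x j t ^ α i t) ^ (u.1 : Fin m →₀ ℕ) i) := by
    have hev : ∀ h : Fin K → Fin n,
        MvPolynomial.eval (fun p : Fin K × Fin d => x (h p.1) p.2)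
          (∑ u ∈ f.support.attach, MvPolynomial.C (f.coeff u.1) *
            ∏ k : Fin (∑ i, (u.1 : Fin m →₀ ℕ) i), ∏ t : Fin d,
              MvPolynomial.X (R := ℝ) (Fin.castLE (hdeg u.1 u.2) k, t) ^ α (σ u.1 k) t)
        = ∑ u ∈ f.support.attach, f.coeff u.1 *
            ∏ k : Fin (∑ i, (u.1 : Fin m →₀ ℕ) i), ∏ t : Fin d,
              x (h (Fin.castLE (hdeg u.1 u.2) k)) t ^ α (σ u.1 k) t := by
      intro h
      simp [map_sum, map_mul, map_prod, map_pow]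
    simp only [hev]
    rw [Finset.sum_comm]
    apply Finset.sum_congr rfl
    intro u _
    rw [← Finset.mul_sum]
    congr 1
    have hcount := countLE n K (∑ i, (u.1 : Fin m →₀ ℕ) i) (hdeg u.1 u.2)
      (fun h' => ∏ k, ∏ t : Fin d, x (h' k) t ^ α (σ u.1 k) t)
    rw [hcount]
    congr 1
    have h2 := Finset.prod_univ_sum (t := fun _ : Fin (∑ i, (u.1 : Fin m →₀ ℕ) i) =>
        (univ : Finset (Fin n)))
      (f := fun k j => ∏ t : Fin d, x j t ^ α (σ u.1 k) t)
    rw [Fintype.piFinset_univ] at h2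
    rw [← h2]
    exact hσ u.1 (fun i => ∑ j : Fin n, ∏ t : Fin d, x j t ^ α i t)
  rw [hRHS, Finset.mul_sum]
  -- compute the LHS
  rw [MvPolynomial.eval_eq']
  rw [← Finset.sum_attach f.support (fun u => f.coeff u *
    ∏ i, ((n : ℝ)⁻¹ * ∑ j : Fin n, ∏ t : Fin d, x j t ^ α i t) ^ u i)]
  apply Finset.sum_congr rfl
  intro u _
  have ha : (∑ i, (u.1 : Fin m →₀ ℕ) i) ≤ K := hdeg u.1 u.2
  have hpow : ((n : ℝ) ^ K)⁻¹ * (n : ℝ) ^ (K - ∑ i, (u.1 : Fin m →₀ ℕ) i)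
      = ((n : ℝ) ^ (∑ i, (u.1 : Fin m →₀ ℕ) i))⁻¹ := by
    rw [← Nat.sub_add_cancel ha, pow_add]
    field_simp
    rw [Nat.add_sub_cancel]
  have hprod : ∏ i, ((n : ℝ)⁻¹ * ∑ j : Fin n, ∏ t : Fin d, x j t ^ α i t) ^ (u.1 : Fin m →₀ ℕ) i
      = ((n : ℝ) ^ (∑ i, (u.1 : Fin m →₀ ℕ) i))⁻¹ *
          ∏ i, (∑ j : Fin n, ∏ t : Fin d, x j t ^ α i t) ^ (u.1 : Fin m →₀ ℕ) i := by
    simp only [mul_pow, Finset.prod_mul_distrib]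
    rw [Finset.prod_pow_eq_pow_sum, ← inv_pow]
  rw [hprod, ← hpow]
  ring
end
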